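/- arXiv:1302.5591 — 9 statements merged into one kernel-verified Lean document; each statement's English description precedes it below -/
import Mathlib

section
/- Let q = 2^m, let f(x) = x^(2^i+1) with 0 ≤ i < m, and let d = gcd(i, m). If m/d is even, then the image set I_f(0) = {f(x) : x ∈ F_q} has cardinality 1 + (q−1)/(2^d+1). -/
lemma dvd_two_pow_gcd_sub_one (a b : ℕ) : ∀ g : ℕ, g ∣ 2 ^ a - 1 → g ∣ 2 ^ b - 1 →
    g ∣ 2 ^ Nat.gcd a b - 1 := by
  induction a, b using Nat.gcd.induction with
  | H0 b => intro g _ hb; simpa using hb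
  | H1 a b ha ih =>
    intro g hg hb
    rw [Nat.gcd_rec]
    refine ih g ?_ hg
    have key : 2 ^ b - 2 ^ (b % a) = 2 ^ (b % a) * ((2 ^ a) ^ (b / a) - 1) := by
      rw [Nat.mul_sub, mul_one, ← pow_mul, ← pow_add, Nat.mod_add_div]
    have h1 : g ∣ 2 ^ b - 2 ^ (b % a) := by
      rw [key]
      exact hg.trans (Dvd.dvd.mul_left (by simpa using Nat.sub_dvd_pow_sub_pow (2^a) 1 (b/a)) _)
    have h2 := Nat.dvd_sub hb h1
    have e1 : (1:ℕ) ≤ 2 ^ (b % a) := Nat.one_le_two_pow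
    have e2 : 2 ^ (b % a) ≤ 2 ^ b := Nat.pow_le_pow_right (by norm_num) (Nat.mod_le b a)
    have : 2 ^ b - 1 - (2 ^ b - 2 ^ (b % a)) = 2 ^ (b % a) - 1 := by omega
    rwa [this] at h2

lemma gold_gcd (m i d : ℕ) (hm : 0 < m) (hi : i < m)
    (hd : d = Nat.gcd i m) (hdiv : Even (m / d)) :
    Nat.gcd (2 ^ i + 1) (2 ^ m - 1) = 2 ^ d + 1 := by
  have hdm : d ∣ m := hd ▸ Nat.gcd_dvd_right i m
  have hdi : d ∣ i := hd ▸ Nat.gcd_dvd_left i m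
  have hd0 : 0 < d := hd ▸ Nat.gcd_pos_of_pos_right i hm
  have hi0 : 0 < i := by
    rcases Nat.eq_zero_or_pos i with h | h
    · exfalso; subst h; simp [Nat.gcd_zero_left] at hd; subst hd
      rw [Nat.div_self hm] at hdiv; exact (Nat.not_even_iff_odd.2 odd_one) hdiv
    · exact h
  have hcop : Nat.Coprime (i / d) (m / d) := by
    rw [hd]; exact Nat.coprime_div_gcd_div_gcd (hd ▸ hd0)
  have hodd : Odd (i / d) := by
    rcases Nat.even_or_odd (i / d) with h | h
    · exfalso
      obtain ⟨k, hk⟩ := h; obtain ⟨l, hl⟩ := hdiv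
      have : 2 ∣ Nat.gcd (i / d) (m / d) := Nat.dvd_gcd ⟨k, by omega⟩ ⟨l, by omega⟩
      rw [hcop] at this; omega
    · exact h
  have h2dm : 2 * d ∣ m := by
    obtain ⟨l, hl⟩ := hdiv
    exact ⟨l, by rw [← Nat.div_mul_cancel hdm, hl]; ring⟩
  -- 2^d + 1 ∣ 2^i + 1
  have hA1 : 2 ^ d + 1 ∣ 2 ^ i + 1 := by
    have := hodd.nat_add_dvd_pow_add_pow (2 ^ d) 1
    simpa [← pow_mul, Nat.mul_div_cancel' hdi] using this
  -- 2^d + 1 ∣ 2^m - 1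
  have h2d : (2:ℕ) ^ (2 * d) - 1 = (2 ^ d + 1) * (2 ^ d - 1) := by
    rw [two_mul, pow_add, mul_self_tsub_one]
  have hA2 : 2 ^ d + 1 ∣ 2 ^ m - 1 := by
    refine dvd_trans (Dvd.intro _ h2d.symm) ?_
    obtain ⟨k, hk⟩ := h2dm
    have := Nat.sub_dvd_pow_sub_pow (2 ^ (2 * d)) 1 k
    simpa [← pow_mul, ← hk] using this
  have hA : 2 ^ d + 1 ∣ Nat.gcd (2 ^ i + 1) (2 ^ m - 1) := Nat.dvd_gcd hA1 hA2
  -- reverse direction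
  set g := Nat.gcd (2 ^ i + 1) (2 ^ m - 1) with hg
  have hg1 : g ∣ 2 ^ i + 1 := Nat.gcd_dvd_left _ _
  have hg2 : g ∣ 2 ^ m - 1 := Nat.gcd_dvd_right _ _
  have hgi : g ∣ 2 ^ (2 * i) - 1 := by
    refine hg1.trans ?_
    have e1 : (1:ℕ) ≤ 2 ^ i := Nat.one_le_two_pow
    exact ⟨2 ^ i - 1, by rw [two_mul, pow_add, mul_self_tsub_one]⟩
  have hgcd2 : Nat.gcd (2 * i) m = 2 * d := by
    apply Nat.dvd_antisymm
    · have h1 : Nat.gcd (2 * i) m ∣ Nat.gcd (2 * i) (2 * m) :=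
        Nat.dvd_gcd (Nat.gcd_dvd_left _ _) ((Nat.gcd_dvd_right _ _).mul_left 2)
      rwa [Nat.gcd_mul_left, ← hd] at h1
    · exact Nat.dvd_gcd (mul_dvd_mul_left 2 hdi) h2dm
  have hgdd : g ∣ 2 ^ (2 * d) - 1 := by
    have := dvd_two_pow_gcd_sub_one (2 * i) m g hgi hg2
    rwa [hgcd2] at this
  -- g coprime to 2^d - 1
  have hcopg : Nat.Coprime g (2 ^ d - 1) := by
    set c := Nat.gcd g (2 ^ d - 1) with hc
    have hc1 : c ∣ 2 ^ i + 1 := (Nat.gcd_dvd_left _ _).trans hg1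
    have hc2 : c ∣ 2 ^ i - 1 := by
      refine (Nat.gcd_dvd_right g _).trans ?_
      have := Nat.sub_dvd_pow_sub_pow (2 ^ d) 1 (i / d)
      simpa [← pow_mul, Nat.mul_div_cancel' hdi] using this
    have hc3 : c ∣ 2 := by
      have := Nat.dvd_sub hc1 hc2
      have e1 : (1:ℕ) ≤ 2 ^ i := Nat.one_le_two_pow
      have e : 2 ^ i + 1 - (2 ^ i - 1) = 2 := by omega
      rwa [e] at this
    have hodd : Odd g := by
      rcases Nat.even_or_odd g with h | h
      · exfalso
        have : (2:ℕ) ∣ 2 ^ m - 1 := dvd_trans h.two_dvd hg2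
        have e1 : (1:ℕ) ≤ 2 ^ m := Nat.one_le_two_pow
        have e2 : (2:ℕ) ∣ 2 ^ m := dvd_pow_self 2 hm.ne'
        omega
      · exact h
    have hco : Odd c := hodd.of_dvd_nat (Nat.gcd_dvd_left _ _)
    rcases (Nat.dvd_prime Nat.prime_two).1 hc3 with h | h
    · exact h
    · exact absurd (h ▸ hco) (by decide)
  have hB : g ∣ 2 ^ d + 1 := by
    rw [h2d] at hgdd
    exact Nat.Coprime.dvd_of_dvd_mul_right hcopg hgdd
  exact Nat.dvd_antisymm hB hA


lemma range_pow_card (F : Type*) [Field F] [Fintype F] [DecidableEq F] (n : ℕ) (hn : 0 < n) :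
    (Set.range fun x : F => x ^ n).ncard
      = 1 + (Fintype.card F - 1) / Nat.gcd n (Fintype.card F - 1) := by
  obtain ⟨g, hg⟩ := IsCyclic.exists_generator (α := Fˣ)
  have hset : (Set.range fun x : F => x ^ n)
      = insert (0:F) (Units.val '' (Subgroup.zpowers (g ^ n) : Set Fˣ)) := by
    ext y
    simp only [Set.mem_range, Set.mem_insert_iff, Set.mem_image, SetLike.mem_coe,
      Subgroup.mem_zpowers_iff]
    constructor
    · rintro ⟨x, rfl⟩
      by_cases hx : x = 0
      · left; simp [hx, zero_pow hn.ne']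
      · right
        obtain ⟨k, hk⟩ := hg (Units.mk0 x hx)
        refine ⟨(g ^ n) ^ k, ⟨k, rfl⟩, ?_⟩
        have : (g ^ n) ^ k = (g ^ k) ^ n := by
          rw [← zpow_natCast, ← zpow_mul, mul_comm, zpow_mul, zpow_natCast]
        have hk' : (g : Fˣ) ^ k = Units.mk0 x hx := hk
        rw [this, hk']
        simp [Units.val_mk0]
    · rintro (rfl | ⟨u, ⟨k, hk⟩, rfl⟩)
      · exact ⟨0, by simp [zero_pow hn.ne']⟩
      · refine ⟨(g ^ k : Fˣ), ?_⟩
        rw [← hk]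
        have : (g ^ n) ^ k = (g ^ k) ^ n := by
          rw [← zpow_natCast, ← zpow_mul, mul_comm, zpow_mul, zpow_natCast]
        rw [this]
        simp
  rw [hset, Set.ncard_insert_of_notMem, Set.ncard_image_of_injective _ Units.val_injective, add_comm]
  · congr 1
    rw [← Nat.card_coe_set_eq]
    have : Nat.card ((Subgroup.zpowers (g ^ n) : Set Fˣ)) = Nat.card (Subgroup.zpowers (g ^ n)) := rfl
    rw [this, Nat.card_zpowers, orderOf_pow,
      orderOf_eq_card_of_forall_mem_zpowers hg, Nat.card_eq_fintype_card, Fintype.card_units,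
      Nat.gcd_comm]
  · rintro ⟨u, -, hu⟩
    exact u.ne_zero hu

/-- For `q = 2^m`, `f(x) = x^(2^i+1)` with `0 ≤ i < m`, `d = gcd(i, m)` and `m/d` even,
the image set `I_f(0) = {f(x) : x ∈ F_q}` has cardinality `1 + (q−1)/(2^d+1)`. -/
theorem gold_image_zero_even (m i d : ℕ) (hm : 0 < m) (hi : i < m)
    (hd : d = Nat.gcd i m) (hdiv : Even (m / d))
    (F : Type*) [Field F] [Fintype F] (hF : Fintype.card F = 2 ^ m) :
    ((Set.range fun x : F => x ^ (2 ^ i + 1)).ncard : ℚ) =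
      1 + (2 ^ m - 1) / (2 ^ d + 1) := by
  classical
  have hgcd := gold_gcd m i d hm hi hd hdiv
  have hdvd : 2 ^ d + 1 ∣ 2 ^ m - 1 := hgcd ▸ Nat.gcd_dvd_right (2 ^ i + 1) (2 ^ m - 1)
  rw [range_pow_card F (2 ^ i + 1) (by positivity), hF, hgcd]
  have h1 : (1:ℕ) ≤ 2 ^ m := Nat.one_le_two_pow
  rw [Nat.cast_add, Nat.cast_one, Nat.cast_div hdvd (by positivity), Nat.cast_sub h1]
  push_cast
  ring
end

section
/- Let m be an even positive integer and q = 2^m. Then for every t in F_q^*, the set {x^(2^(m/2)+1) + t·x : x ∈ F_q} has cardinality (2^m + 2^(m/2))/2. -/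
open Finset

/-- For `q = 2^m` with `m` even and positive, for every `t ∈ F_q^*` the set
`{x^(2^(m/2)+1) + t·x : x ∈ F_q}` has cardinality `(2^m + 2^(m/2))/2`. -/
theorem gold_sqrt_image_nonzero (m : ℕ) (hm : 0 < m) (hme : Even m)
    (F : Type*) [Field F] [Fintype F] (hF : Fintype.card F = 2 ^ m) :
    ∀ t : F, t ≠ 0 →
      ((Set.range fun x : F => x ^ (2 ^ (m / 2) + 1) + t * x).ncard : ℚ) =
        (2 ^ m + 2 ^ (m / 2)) / 2 := by
  classical
  intro t ht
  set k := m / 2 with hkdef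
  set s := 2 ^ k with hsdef
  have hks : k + k = m := by
    obtain ⟨r, hr⟩ := hme; omega
  have hs2 : 2 ≤ s := by
    have hk1 : 1 ≤ k := by omega
    calc 2 = 2 ^ 1 := rfl
    _ ≤ 2 ^ k := Nat.pow_le_pow_right (by norm_num) hk1
  have hss : s * s = 2 ^ m := by rw [hsdef, ← pow_add, hks]
  have hcard : Fintype.card F = s * s := by rw [hF, hss]
  -- characteristic 2
  haveI hchar : CharP F 2 := by
    have h1 : CharP F (ringChar F) := ringChar.charP F
    obtain ⟨n, hp, hcard'⟩ := FiniteField.card F (ringChar F)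
    have hdvd : ringChar F ∣ 2 ^ m := by
      rw [← hF, hcard']; exact dvd_pow_self _ (by positivity)
    have h2 : ringChar F = 2 :=
      (Nat.prime_dvd_prime_iff_eq hp Nat.prime_two).mp (hp.dvd_of_dvd_pow hdvd)
    rwa [h2] at h1
  haveI : Fact (Nat.Prime 2) := ⟨Nat.prime_two⟩
  have frob : ∀ a b : F, (a + b) ^ s = a ^ s + b ^ s := fun a b =>
    add_pow_char_pow a b 2 k
  have pss : ∀ a : F, (a ^ s) ^ s = a := by
    intro a
    rw [← pow_mul, hss, ← hF, FiniteField.pow_card]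
  have two0 : ∀ a : F, a + a = 0 := fun a => CharTwo.add_self_eq_zero a
  have h2 : (2 : F) = 0 := by
    have := two0 1; linear_combination this
  have addcancel : ∀ a b : F, a + b = 0 → a = b := by
    intro a b h
    have : a = -b := eq_neg_of_add_eq_zero_left h
    rwa [CharTwo.neg_eq] at this
  set f : F → F := fun x => x ^ (s + 1) + t * x with hfdef
  set c : F → F := fun x => (x * t) ^ s + x * t + t ^ (s + 1) with hcdef
  -- basic algebra
  have hts1 : (t ^ (s + 1)) ^ s = t ^ (s + 1) := by
    rw [pow_succ t s, mul_pow, pss, mul_comm, ← pow_succ]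
  have hcs : ∀ x : F, (c x) ^ s = c x := by
    intro x
    simp only [hcdef]
    rw [frob, frob, pss, hts1]
    ring
  have fexp : ∀ x u : F, f (x + u) = f x + (x ^ s * u + x * u ^ s + u ^ (s + 1) + t * u) := by
    intro x u
    simp only [hfdef]
    rw [pow_succ, pow_succ, pow_succ, frob]
    ring
  -- forward: characterization of collisions
  have key : ∀ x u : F, x ^ s * u + x * u ^ s + u ^ (s + 1) + t * u = 0 → u ≠ 0 →
      t * u = c x := by
    intro x u hE hu
    have hEs : x * u ^ s + x ^ s * u + u ^ (s + 1) + t ^ s * u ^ s = 0 := by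
      have h := congrArg (· ^ s) hE
      rw [frob, frob, frob, mul_pow, mul_pow, mul_pow, pss, pss] at h
      rw [show (u ^ (s + 1)) ^ s = u ^ (s + 1) by
        rw [pow_succ u s, mul_pow, pss, mul_comm, ← pow_succ]] at h
      rw [show (0 : F) ^ s = 0 from zero_pow (by positivity)] at h
      linear_combination h
    have hws : t ^ s * u ^ s = t * u := by
      have h3 : t * u + t ^ s * u ^ s = 0 := by
        linear_combination hE + hEs - (x ^ s * u + x * u ^ s + u ^ (s + 1)) * h2
      exact (addcancel _ _ h3).symm
    have h4 : u * (c x + t * u) = 0 := by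
      simp only [hcdef]
      rw [mul_pow]
      linear_combination t ^ s * hE - (x + u) * hws
    rcases mul_eq_zero.mp h4 with h | h
    · exact absurd h hu
    · exact (addcancel _ _ h).symm
  -- backward: f (x + c x / t) = f x
  have fback : ∀ x : F, f (x + c x / t) = f x := by
    intro x
    rw [fexp]
    have hut : (c x / t) * t = c x := div_mul_cancel₀ _ ht
    have hus : (c x / t) ^ s * t ^ s = c x := by
      rw [← mul_pow, hut, hcs]
    have hts : (t : F) ^ s * t ≠ 0 := mul_ne_zero (pow_ne_zero _ ht) ht
    have hE : x ^ s * (c x / t) + x * (c x / t) ^ s + (c x / t) ^ (s + 1) + t * (c x / t) = 0 := by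
      have h5 : (x ^ s * (c x / t) + x * (c x / t) ^ s + (c x / t) ^ (s + 1) + t * (c x / t)) * (t ^ s * t) = 0 := by
        have hc : c x = (x * t) ^ s + x * t + t ^ (s + 1) := by rw [hcdef]
        rw [mul_pow] at hc
        linear_combination (x ^ s * t ^ s + (c x / t) ^ s * t ^ s + t ^ s * t) * hut +
          (x * t + c x) * hus + (c x) * hc + (c x * c x) * h2
      exact (mul_eq_zero.mp h5).resolve_right hts
    rw [hE, add_zero]
  have sigma_ne : ∀ x : F, c x ≠ 0 → x + c x / t ≠ x := by
    intro x hc hx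
    apply hc
    have hd : c x / t = 0 := add_eq_left.mp hx
    rcases div_eq_zero_iff.mp hd with h | h
    · exact h
    · exact absurd h ht
  have fwd : ∀ x y : F, f y = f x → y = x ∨ y = x + c x / t := by
    intro x y hfy
    have hy : y = x + (y - x) := by ring
    rw [hy, fexp] at hfy
    have hE : x ^ s * (y - x) + x * (y - x) ^ s + (y - x) ^ (s + 1) + t * (y - x) = 0 :=
      add_eq_left.mp hfy
    by_cases hu : y - x = 0
    · left; exact sub_eq_zero.mp hu
    · right
      have hk2 := key x (y - x) hE hu
      have : y - x = c x / t := by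
        rw [eq_div_iff ht]; linear_combination hk2
      exact sub_eq_iff_eq_add'.mp this
  have csig : ∀ x : F, c x ≠ 0 → c (x + c x / t) ≠ 0 := by
    intro x hc hc0
    have h1 : f x = f (x + c x / t) := (fback x).symm
    rcases fwd (x + c x / t) x h1 with h | h
    · exact sigma_ne x hc h.symm
    · rw [hc0, zero_div, add_zero] at h
      exact sigma_ne x hc h.symm
  -- the additive map L z = z^s + z
  set L : F → F := fun z => z ^ s + z with hLdef
  have hLadd : ∀ a b : F, L (a + b) = L a + L b := by
    intro a b; simp only [hLdef]; rw [frob]; ring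
  have hLL : ∀ z : F, L (L z) = 0 := by
    intro z
    simp only [hLdef]
    rw [frob, pss]
    linear_combination (z ^ s + z) * h2
  set Kf : Finset F := univ.filter fun z => L z = 0 with hKdef
  set If : Finset F := univ.image L with hIdef
  have hIsubK : If ⊆ Kf := by
    intro w hw
    simp only [hIdef, mem_image] at hw
    obtain ⟨z, -, rfl⟩ := hw
    simp only [hKdef, mem_filter]
    exact ⟨mem_univ _, hLL z⟩
  have hfiber : ∀ z₀ : F, (univ.filter fun z => L z = L z₀).card = Kf.card := by
    intro z₀
    apply Finset.card_bij' (fun z _ => z + z₀) (fun z _ => z + z₀)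
    · intro a ha
      simp only [mem_filter] at ha
      simp only [hKdef, mem_filter]
      refine ⟨mem_univ _, ?_⟩
      rw [hLadd, ha.2]
      exact two0 _
    · intro a ha
      simp only [hKdef, mem_filter] at ha
      simp only [mem_filter]
      refine ⟨mem_univ _, ?_⟩
      rw [hLadd, ha.2, zero_add]
    · intro a ha
      rw [add_assoc, two0, add_zero]
    · intro a ha
      rw [add_assoc, two0, add_zero]
  have hcount : s * s = If.card * Kf.card := by
    have h1 : (univ : Finset F).card = ∑ w ∈ If, (univ.filter fun z => L z = w).card := by
      rw [hIdef]; exact Finset.card_eq_sum_card_image L univ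
    have h2' : ∀ w ∈ If, (univ.filter fun z => L z = w).card = Kf.card := by
      intro w hw
      simp only [hIdef, mem_image] at hw
      obtain ⟨z₀, -, rfl⟩ := hw
      exact hfiber z₀
    rw [Finset.sum_congr rfl h2', Finset.sum_const, smul_eq_mul, Finset.card_univ, hcard] at h1
    exact h1
  have hKle : Kf.card ≤ s := by
    have hpne : (Polynomial.X ^ s + Polynomial.X : Polynomial F) ≠ 0 := by
      intro h
      have h1 := congrArg (fun p => Polynomial.coeff p 1) h
      simp only [Polynomial.coeff_add, Polynomial.coeff_X_pow, Polynomial.coeff_X_one,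
        Polynomial.coeff_zero] at h1
      rw [if_neg (by omega : ¬ 1 = s)] at h1
      simp at h1
    have hdeg : (Polynomial.X ^ s + Polynomial.X : Polynomial F).natDegree = s := by
      compute_degree!
      · rw [if_neg (by omega : ¬ 1 = s)]
        norm_num
      · omega
    have hsub : Kf ⊆ (Polynomial.X ^ s + Polynomial.X : Polynomial F).roots.toFinset := by
      intro z hz
      simp only [hKdef, mem_filter, hLdef] at hz
      rw [Multiset.mem_toFinset, Polynomial.mem_roots hpne]
      simp only [Polynomial.IsRoot, Polynomial.eval_add, Polynomial.eval_pow, Polynomial.eval_X]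
      exact hz.2
    calc Kf.card ≤ _ := Finset.card_le_card hsub
    _ ≤ Multiset.card (Polynomial.X ^ s + Polynomial.X : Polynomial F).roots :=
        Multiset.toFinset_card_le _
    _ ≤ (Polynomial.X ^ s + Polynomial.X : Polynomial F).natDegree := Polynomial.card_roots' _
    _ = s := hdeg
  have hKcard : Kf.card = s := by
    have hIle : If.card ≤ Kf.card := Finset.card_le_card hIsubK
    have hge : s ≤ Kf.card := by nlinarith [hcount, hIle, hKle]
    omega
  have hIcard : If.card = s := by
    rw [hKcard] at hcount
    exact (Nat.eq_of_mul_eq_mul_right (by omega) hcount.symm)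
  have hIK : If = Kf := Finset.eq_of_subset_of_card_le hIsubK (by rw [hKcard, hIcard])
  -- the fixed-point set T
  set T : Finset F := univ.filter fun x => c x = 0 with hTdef
  have hdK : t ^ (s + 1) ∈ Kf := by
    simp only [hKdef, mem_filter, hLdef]
    refine ⟨mem_univ _, ?_⟩
    rw [hts1]
    exact two0 _
  have hdI : t ^ (s + 1) ∈ If := by rw [hIK]; exact hdK
  obtain ⟨z₀, -, hz₀⟩ : ∃ z₀ ∈ (univ : Finset F), L z₀ = t ^ (s + 1) := by
    simpa only [hIdef, mem_image] using hdI
  have hTcard : T.card = s := by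
    have hb : T.card = (univ.filter fun z => L z = L z₀).card := by
      apply Finset.card_bij' (fun x _ => x * t) (fun z _ => z / t)
      · intro x hx
        simp only [hTdef, mem_filter, hcdef] at hx
        simp only [mem_filter]
        refine ⟨mem_univ _, ?_⟩
        rw [hz₀]
        simp only [hLdef]
        exact addcancel _ _ hx.2
      · intro z hz
        simp only [mem_filter] at hz
        have hz2 : L z = t ^ (s + 1) := hz.2.trans hz₀
        simp only [hLdef] at hz2
        simp only [hTdef, mem_filter, hcdef]
        refine ⟨mem_univ _, ?_⟩
        rw [div_mul_cancel₀ _ ht, hz2]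
        exact two0 _
      · intro x hx
        exact mul_div_cancel_right₀ x ht
      · intro z hz
        exact div_mul_cancel₀ z ht
    rw [hb, hfiber, hKcard]
  -- assemble the count
  set A : Finset F := univ.image f with hAdef
  set B : Finset F := univ \ T with hBdef
  have hBcard : B.card = s * s - s := by
    rw [hBdef, Finset.card_sdiff_of_subset (subset_univ T), Finset.card_univ, hcard, hTcard]
  have finjT : ∀ x ∈ T, ∀ y : F, f y = f x → y = x := by
    intro x hx y hfy
    rcases fwd x y hfy with h | h
    · exact h
    · simp only [hTdef, mem_filter] at hx
      rw [hx.2, zero_div, add_zero] at h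
      exact h
  have hsplit : A = T.image f ∪ B.image f := by
    rw [hAdef, hBdef, ← Finset.image_union, Finset.union_sdiff_of_subset (subset_univ T)]
  have hdisj : Disjoint (T.image f) (B.image f) := by
    rw [Finset.disjoint_left]
    intro a ha hb
    simp only [mem_image] at ha hb
    obtain ⟨x, hx, rfl⟩ := ha
    obtain ⟨y, hy, hfy⟩ := hb
    have hyx := finjT x hx y hfy
    simp only [hBdef, mem_sdiff] at hy
    exact hy.2 (hyx ▸ hx)
  have hTimg : (T.image f).card = s := by
    rw [Finset.card_image_of_injOn, hTcard]
    intro x hx y hy hxy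
    exact (finjT x hx y hxy.symm).symm
  have hBimg : (B.image f).card * 2 = s * s - s := by
    have h1 : B.card = ∑ w ∈ B.image f, (B.filter fun x => f x = w).card :=
      Finset.card_eq_sum_card_image f B
    have h2' : ∀ w ∈ B.image f, (B.filter fun x => f x = w).card = 2 := by
      intro w hw
      simp only [mem_image] at hw
      obtain ⟨x, hx, rfl⟩ := hw
      have hxB : x ∈ B := hx
      simp only [hBdef, mem_sdiff, hTdef, mem_filter] at hx
      have hcx : c x ≠ 0 := fun h => hx.2 ⟨mem_univ _, h⟩
      have hσB : x + c x / t ∈ B := by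
        simp only [hBdef, mem_sdiff, hTdef, mem_filter]
        exact ⟨mem_univ _, fun h => csig x hcx h.2⟩
      have hfil : B.filter (fun y => f y = f x) = {x, x + c x / t} := by
        ext y
        simp only [mem_filter, mem_insert, mem_singleton]
        constructor
        · rintro ⟨hyB, hfy⟩
          exact fwd x y hfy
        · rintro (rfl | rfl)
          · exact ⟨hxB, rfl⟩
          · exact ⟨hσB, fback x⟩
      rw [hfil, Finset.card_insert_of_notMem (by
        simp only [mem_singleton]
        exact fun h => sigma_ne x hcx h.symm), Finset.card_singleton]
    rw [Finset.sum_congr rfl h2', Finset.sum_const, smul_eq_mul] at h1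
    rw [← hBcard, h1, mul_comm]
  have hAcard : A.card * 2 = s * s + s := by
    rw [hsplit, Finset.card_union_of_disjoint hdisj, add_mul, hTimg, hBimg]
    have hle : s ≤ s * s := Nat.le_mul_of_pos_left s (by omega)
    omega
  have hrange : (Set.range f).ncard = A.card := by
    rw [← Set.image_univ, ← Finset.coe_univ, ← Finset.coe_image, Set.ncard_coe_finset, hAdef]
  rw [hrange, eq_div_iff (by norm_num : (2 : ℚ) ≠ 0)]
  have hcast : ((s * s + s : ℕ) : ℚ) = 2 ^ m + 2 ^ k := by
    push_cast [hsdef]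
    rw [← pow_add, hks]
  rw [← hcast]
  exact_mod_cast hAcard
end

section
/- Let m be an even positive integer, q = 2^m, and let Tr : F_q → F_{2^(m/2)} denote the relative trace map Tr(x) = x^(2^(m/2)) + x onto the subfield with 2^(m/2) elements. Define g(x) = x^(2^(m/2)+1) + x. Then for distinct y, z in F_q, g(y) = g(z) holds if and only if Tr(y) ≠ 1 and z = y + Tr(y) + 1. Consequently g is injective on the set of elements of F_q with relative trace 1 and two-to-one on its complement. -/
/-- For `q = 2^m` with `m` even and positive, let `Tr(x) = x^(2^(m/2)) + x` be the
relative trace onto the subfield with `2^(m/2)` elements, and `g(x) = x^(2^(m/2)+1) + x`.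
Then for distinct `y, z`, `g(y) = g(z)` iff `Tr(y) ≠ 1` and `z = y + Tr(y) + 1`.
Consequently `g` is injective on the elements of relative trace `1` and two-to-one on
the complement. -/
theorem g_collision_characterization (m : ℕ) (hm : 0 < m) (hme : Even m)
    (F : Type*) [Field F] [Fintype F] (hF : Fintype.card F = 2 ^ m)
    (Tr g : F → F) (hTr : ∀ x, Tr x = x ^ (2 ^ (m / 2)) + x)
    (hg : ∀ x, g x = x ^ (2 ^ (m / 2) + 1) + x) :
    (∀ y z : F, y ≠ z → (g y = g z ↔ Tr y ≠ 1 ∧ z = y + Tr y + 1)) ∧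
      Set.InjOn g {y : F | Tr y = 1} ∧
      (∀ y : F, Tr y ≠ 1 → {z : F | Tr z ≠ 1 ∧ g z = g y}.ncard = 2) := by
  classical
  -- characteristic 2
  obtain ⟨p, hpi⟩ := CharP.exists F
  haveI := hpi
  obtain ⟨n, hpprime, hcard⟩ := FiniteField.card F p
  have hp2 : p = 2 := by
    have hdvd : p ∣ 2 ^ m := by
      rw [← hF, hcard]
      exact dvd_pow_self p (by positivity)
    have := hpprime.dvd_of_dvd_pow hdvd
    exact (Nat.prime_dvd_prime_iff_eq hpprime Nat.prime_two).mp this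
  subst hp2
  haveI : CharP F 2 := hpi
  haveI : Fact (Nat.Prime 2) := ⟨Nat.prime_two⟩
  have h2 : (2 : F) = 0 := by exact_mod_cast CharP.cast_eq_zero F 2
  set s : ℕ := 2 ^ (m / 2) with hs
  have hs0 : s ≠ 0 := by positivity
  have hss : s * s = 2 ^ m := by
    obtain ⟨k, hk⟩ := hme
    rw [hs, ← pow_add]
    congr 1
    omega
  have hpow : ∀ x : F, (x ^ s) ^ s = x := by
    intro x; rw [← pow_mul, hss, ← hF, FiniteField.pow_card]
  have hadd : ∀ x y : F, (x + y) ^ s = x ^ s + y ^ s := by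
    intro x y; rw [hs]; exact add_pow_char_pow x y 2 (m / 2)
  have hTrfix : ∀ x : F, (Tr x) ^ s = Tr x := by
    intro x
    rw [hTr, hadd, hpow]
    ring
  have main : ∀ y z : F, y ≠ z → (g y = g z ↔ Tr y ≠ 1 ∧ z = y + Tr y + 1) := by
    intro y z hyz
    constructor
    · intro h
      obtain ⟨c, hzc⟩ : ∃ c : F, z = y + c := ⟨y + z, by linear_combination (-y) * h2⟩
      subst hzc
      have hc0 : c ≠ 0 := by
        intro h0
        apply hyz
        rw [h0, add_zero]
      have hE : y ^ s * c + y * c ^ s + c ^ s * c + c = 0 := by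
        have h' := h
        rw [hg, hg, pow_succ, pow_succ, hadd] at h'
        linear_combination -h'
      have hEs : y * c ^ s + y ^ s * c + c * c ^ s + c ^ s = 0 := by
        have h' := congrArg (· ^ s) hE
        simp only [hadd, mul_pow, hpow, zero_pow hs0] at h'
        linear_combination h'
      have hcs : c ^ s = c := by linear_combination hEs - hE
      rw [hcs] at hE
      have heq : y ^ s + y + c + 1 = 0 := by
        have hc' : c * (y ^ s + y + c + 1) = 0 := by linear_combination hE
        rcases mul_eq_zero.mp hc' with h0 | h0
        · exact absurd h0 hc0
        · exact h0
      have hcval : c = Tr y + 1 := by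
        rw [hTr]
        linear_combination heq - (y ^ s + y + 1) * h2
      constructor
      · intro h1
        apply hc0
        rw [hcval, h1]
        linear_combination h2
      · rw [hcval]; ring
    · rintro ⟨ht, hz⟩
      have hz' : z = y ^ s + 1 := by
        rw [hz, hTr]; linear_combination y * h2
      have hzs : z ^ s = y + 1 := by rw [hz', hadd, hpow, one_pow]
      rw [hg, hg, pow_succ, pow_succ, hzs, hz']
      linear_combination -(y ^ s + 1) * h2
  refine ⟨main, ?_, ?_⟩
  · intro y hy z hz hgyz
    by_contra hne
    exact ((main y z hne).mp hgyz).1 hy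
  · intro y hy1
    have hz0 : y + Tr y + 1 ≠ y := by
      intro h
      apply hy1
      linear_combination h - h2
    have hTz : Tr (y + Tr y + 1) = Tr y := by
      rw [hTr (y + Tr y + 1), hadd, hadd, one_pow, hTrfix]
      linear_combination hTr y + (y ^ s + y + 1) * h2
    have hset : {z : F | Tr z ≠ 1 ∧ g z = g y} = {y, y + Tr y + 1} := by
      ext z
      simp only [Set.mem_setOf_eq, Set.mem_insert_iff, Set.mem_singleton_iff]
      constructor
      · rintro ⟨hz1, hgz⟩
        by_cases hzy : z = y
        · left; exact hzy
        · right
          exact ((main y z (Ne.symm hzy)).mp hgz.symm).2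
      · rintro (rfl | rfl)
        · exact ⟨hy1, rfl⟩
        · refine ⟨by rw [hTz]; exact hy1, ?_⟩
          exact (((main y _ (Ne.symm hz0)).mpr ⟨hy1, rfl⟩)).symm
    rw [hset, Set.ncard_pair (Ne.symm hz0)]
end

section
/- Let q = 2^m with m even and let n ≥ 1 be an integer. Then there exists a Kakeya set K in F_q^n such that |K| < (2q/(q + √q − 2)) · ((q + √q)/2)^n. -/
open Finset in
lemma aux_two_mul_card_image_le {α β : Type*} [Fintype α] [DecidableEq α] [DecidableEq β]
    (f : α → β) (σ : α → α) (hf : ∀ u, f (σ u) = f u) :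
    2 * (Finset.image f Finset.univ).card ≤
      Fintype.card α + (Finset.univ.filter fun u => σ u = u).card := by
  classical
  set I := Finset.image f Finset.univ with hI
  have h1 : ∑ b ∈ I, (Finset.univ.filter fun u => f u = b).card = Fintype.card α := by
    rw [← Finset.card_univ]
    exact (Finset.card_eq_sum_card_fiberwise
      (fun u _ => Finset.mem_image_of_mem f (Finset.mem_univ u))).symm
  have h2 : ∑ b ∈ I, ((Finset.univ.filter fun u => σ u = u).filter fun u => f u = b).card
      = (Finset.univ.filter fun u => σ u = u).card := by
    exact (Finset.card_eq_sum_card_fiberwise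
      (fun u _ => Finset.mem_image_of_mem f (Finset.mem_univ u))).symm
  have h3 : ∀ b ∈ I, 2 ≤ (Finset.univ.filter fun u => f u = b).card +
      ((Finset.univ.filter fun u => σ u = u).filter fun u => f u = b).card := by
    intro b hb
    obtain ⟨u, -, hu⟩ := Finset.mem_image.mp hb
    by_cases hfix : ∃ v, f v = b ∧ σ v = v
    · obtain ⟨v, hv1, hv2⟩ := hfix
      have m1 : v ∈ Finset.univ.filter fun w => f w = b := by simp [hv1]
      have m2 : v ∈ (Finset.univ.filter fun w => σ w = w).filter fun w => f w = b := by
        simp [hv1, hv2]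
      have c1 := Finset.card_pos.mpr ⟨v, m1⟩
      have c2 := Finset.card_pos.mpr ⟨v, m2⟩
      omega
    · push_neg at hfix
      have hne : σ u ≠ u := fun h => hfix u hu h
      have h21 : 2 ≤ (Finset.univ.filter fun u => f u = b).card := by
        apply Finset.one_lt_card.mpr
        exact ⟨u, by simp [hu], σ u, by simp [hf u, hu], fun h => hne h.symm⟩
      omega
  have h4 := Finset.sum_le_sum h3
  rw [Finset.sum_add_distrib, h1, h2, Finset.sum_const, smul_eq_mul] at h4
  omega


lemma aux_card_fixed_le {F : Type*} [Field F] [Fintype F] [DecidableEq F]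
    (s : ℕ) (hs : 2 ≤ s) (c : F) :
    (Finset.univ.filter fun u : F => u ^ s + c = u).card ≤ s := by
  classical
  set p : Polynomial F := Polynomial.X ^ s - Polynomial.X + Polynomial.C c with hp
  have hcoeff : p.coeff s = 1 := by
    rw [hp]
    rw [Polynomial.coeff_add, Polynomial.coeff_sub, Polynomial.coeff_X_pow,
      if_pos rfl, Polynomial.coeff_X, if_neg (by omega : ¬ (1 = s)),
      Polynomial.coeff_C, if_neg (by omega : ¬ (s = 0))]
    ring
  have hpne : p ≠ 0 := fun h => by simp [h] at hcoeff
  have hsub : (Finset.univ.filter fun u : F => u ^ s + c = u) ⊆ p.roots.toFinset := by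
    intro u hu
    simp only [Finset.mem_filter, Finset.mem_univ, true_and] at hu
    rw [Multiset.mem_toFinset, Polynomial.mem_roots hpne]
    simp only [Polynomial.IsRoot, hp, Polynomial.eval_add, Polynomial.eval_sub,
      Polynomial.eval_pow, Polynomial.eval_X, Polynomial.eval_C]
    linear_combination hu
  have hdeg : p.natDegree ≤ s := by
    apply le_trans (Polynomial.natDegree_add_le _ _)
    simp only [Polynomial.natDegree_C, max_le_iff]
    constructor
    · apply le_trans (Polynomial.natDegree_sub_le _ _)
      simp [Polynomial.natDegree_X_pow, Polynomial.natDegree_X]; omega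
    · omega
  calc (Finset.univ.filter fun u : F => u ^ s + c = u).card
      ≤ p.roots.toFinset.card := Finset.card_le_card hsub
    _ ≤ Multiset.card p.roots := Multiset.toFinset_card_le _
    _ ≤ p.natDegree := Polynomial.card_roots' p
    _ ≤ s := hdeg

lemma aux_frob_add {F : Type*} [CommRing F] (h2 : (2:F) = 0) (r : ℕ) (x y : F) :
    (x + y) ^ 2 ^ r = x ^ 2 ^ r + y ^ 2 ^ r := by
  induction r with
  | zero => simp
  | succ k ih =>
    have hsq : ∀ a b : F, (a + b) ^ 2 = a ^ 2 + b ^ 2 := by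
      intro a b; linear_combination a * b * h2
    rw [pow_succ, pow_mul, pow_mul, pow_mul, ih, hsq]

lemma aux_D_card {F : Type*} [Field F] [Fintype F] [DecidableEq F] (r : ℕ) (hr : 1 ≤ r)
    (hcard : Fintype.card F = 2 ^ r * 2 ^ r) (τ : F) :
    2 * (Finset.image (fun u : F => u ^ (2 ^ r + 1) + τ * u) Finset.univ).card
      ≤ 2 ^ r * 2 ^ r + 2 ^ r := by
  classical
  set s := 2 ^ r with hsdef
  have hs2 : 2 ≤ s := by
    calc 2 = 2 ^ 1 := rfl
    _ ≤ 2 ^ r := Nat.pow_le_pow_right (by norm_num) hr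
  have h2 : (2 : F) = 0 := by
    have h0 : ((Fintype.card F : ℕ) : F) = 0 := FiniteField.cast_card_eq_zero F
    rw [hcard] at h0
    push_cast at h0
    have h1 := mul_self_eq_zero.mp h0
    rw [hsdef] at h1
    push_cast at h1
    exact pow_eq_zero_iff (by omega : r ≠ 0) |>.mp h1
  have hss : ∀ x : F, (x ^ s) ^ s = x := by
    intro x
    rw [← pow_mul, show s * s = Fintype.card F from hcard.symm]
    exact FiniteField.pow_card x
  have hfrob : ∀ x y : F, (x + y) ^ s = x ^ s + y ^ s := fun x y => aux_frob_add h2 r x y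
  by_cases hτ : τ = 0
  · subst hτ
    have himg : (Finset.image (fun u : F => u ^ (s + 1) + 0 * u) Finset.univ)
        = Finset.image (fun u : F => u ^ (s + 1)) Finset.univ := by simp
    rw [himg]
    have key : 2 * (Finset.image (fun u : F => u ^ (s + 1)) Finset.univ).card ≤
        Fintype.card F + (Finset.univ.filter fun u : F => u ^ s = u).card :=
      aux_two_mul_card_image_le (fun u : F => u ^ (s + 1)) (fun u => u ^ s)
        (fun u => by rw [pow_succ, pow_succ, hss]; ring)
    have hfix : (Finset.univ.filter fun u : F => u ^ s = u).card ≤ s := by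
      have h := aux_card_fixed_le (F := F) s hs2 0
      simp only [add_zero] at h
      exact h
    refine le_trans key ?_
    rw [hcard]
    exact Nat.add_le_add_left hfix _
  · have hcne : τ ^ (s + 1) ≠ 0 := pow_ne_zero _ hτ
    have hmain : ∀ v : F, (τ ^ s * v) ^ (s + 1) + τ * (τ ^ s * v)
        = τ ^ (s + 1) * (v ^ (s + 1) + v) := by
      intro v
      have h1 : (τ ^ s) ^ (s + 1) = τ ^ (s + 1) := by
        rw [pow_succ, pow_succ, hss]; ring
      rw [mul_pow, h1]; ring
    have himg : Finset.image (fun u : F => u ^ (s + 1) + τ * u) Finset.univ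
        = Finset.image ((fun w : F => τ ^ (s + 1) * w) ∘ (fun v : F => v ^ (s + 1) + v))
            Finset.univ := by
      ext a
      simp only [Finset.mem_image, Finset.mem_univ, true_and, Function.comp]
      constructor
      · rintro ⟨u, rfl⟩
        refine ⟨u / τ ^ s, ?_⟩
        rw [← hmain (u / τ ^ s), mul_div_cancel₀ _ (pow_ne_zero _ hτ)]
      · rintro ⟨v, rfl⟩
        exact ⟨τ ^ s * v, hmain v⟩
    rw [himg, ← Finset.image_image,
      Finset.card_image_of_injective _ (mul_right_injective₀ hcne)]
    have key : 2 * (Finset.image (fun v : F => v ^ (s + 1) + v) Finset.univ).card ≤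
        Fintype.card F + (Finset.univ.filter fun v : F => v ^ s + 1 = v).card := by
      refine aux_two_mul_card_image_le (fun v : F => v ^ (s + 1) + v)
        (fun v => v ^ s + 1) ?_
      intro v
      have e1 : (v ^ s + 1) ^ s = v + 1 := by rw [hfrob, hss, one_pow]
      rw [pow_succ, e1, pow_succ]
      linear_combination (v ^ s + 1) * h2
    have hfix := aux_card_fixed_le (F := F) s hs2 (1 : F)
    refine le_trans key ?_
    rw [hcard]
    exact Nat.add_le_add_left hfix _


/-- For `q = 2^m` with `m` even (and positive) and `n ≥ 1`, there is a Kakeya set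
`K ⊆ F_q^n` with `|K| < (2q/(q + √q − 2)) · ((q + √q)/2)^n`, where `√q = 2^(m/2)`. -/
theorem kakeya_upper_bound_even_power (m n : ℕ) (hm : 0 < m) (hme : Even m) (hn : 1 ≤ n)
    (F : Type*) [Field F] [Fintype F] (hF : Fintype.card F = 2 ^ m) :
    ∃ K : Set (Fin n → F),
      (∀ x : Fin n → F, ∃ y : Fin n → F, ∀ t : F, (fun i => y i + t * x i) ∈ K) ∧
      (K.ncard : ℝ) <
        2 * 2 ^ m / ((2 : ℝ) ^ m + 2 ^ (m / 2) - 2) *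
          (((2 : ℝ) ^ m + 2 ^ (m / 2)) / 2) ^ n := by
  classical
  obtain ⟨r, hm2⟩ := hme
  have hr : 1 ≤ r := by omega
  have hcard0 : Fintype.card F = 2 ^ r * 2 ^ r := by rw [hF, hm2, pow_add]
  obtain ⟨s, hsdef⟩ : ∃ s, s = 2 ^ r := ⟨_, rfl⟩
  have hcard : Fintype.card F = s * s := by rw [hsdef]; exact hcard0
  have hs2 : 2 ≤ s := by
    rw [hsdef]
    calc 2 = 2 ^ 1 := rfl
    _ ≤ 2 ^ r := Nat.pow_le_pow_right (by norm_num) hr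
  -- the slice sets
  let D : F → Finset F := fun τ => Finset.image (fun u : F => u ^ (s + 1) + τ * u) Finset.univ
  have hseven : 2 ∣ s * (s + 1) := Dvd.dvd.mul_right ⟨2 ^ (r - 1), by
    rw [hsdef, ← pow_succ']; congr 1; omega⟩ _
  obtain ⟨A, hA2⟩ := hseven
  have hDA : ∀ τ : F, (D τ).card ≤ A := by
    intro τ
    have h := aux_D_card r hr hcard0 τ
    rw [← hsdef] at h
    have h' : 2 * (D τ).card ≤ 2 * A := by
      calc 2 * (D τ).card ≤ s * s + s := h
      _ = s * (s + 1) := by ring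
      _ = 2 * A := hA2
    exact Nat.le_of_mul_le_mul_left h' (by norm_num)
  have hA3 : 3 ≤ A := by
    have h6 : 2 * 3 ≤ 2 * A := by
      rw [← hA2]; exact Nat.mul_le_mul hs2 (by omega)
    omega
  -- the Kakeya set
  let T : Fin n → F → Finset (Fin n → F) := fun j τ =>
    Finset.univ.filter (fun z => z j = τ ∧ (∀ i, j < i → z i = 0) ∧ (∀ i, i < j → z i ∈ D τ))
  let Kf : Finset (Fin n → F) := Finset.univ.biUnion (fun p : Fin n × F => T p.1 p.2)
  refine ⟨↑Kf, ?_, ?_⟩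
  · -- Kakeya property
    intro x
    by_cases hx : x = 0
    · refine ⟨0, fun t => ?_⟩
      subst hx
      apply Finset.mem_coe.mpr
      apply Finset.mem_biUnion.mpr
      refine ⟨(⟨0, hn⟩, 0), Finset.mem_univ _, ?_⟩
      simp only [T, Finset.mem_filter, Finset.mem_univ, true_and, Pi.zero_apply]
      refine ⟨by ring, fun i _ => by ring, fun i hi => absurd hi (by simp [Fin.lt_def])⟩
    · have hSne : (Finset.univ.filter (fun i => x i ≠ 0)).Nonempty := by
        rcases Function.ne_iff.mp hx with ⟨i, hi⟩
        exact ⟨i, Finset.mem_filter.mpr ⟨Finset.mem_univ _, by simpa using hi⟩⟩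
      set j := (Finset.univ.filter (fun i => x i ≠ 0)).max' hSne with hj
      have hxj : x j ≠ 0 := by
        have h := (Finset.univ.filter (fun i => x i ≠ 0)).max'_mem hSne
        simp only [Finset.mem_filter] at h
        exact h.2
      have hzero : ∀ i, j < i → x i = 0 := by
        intro i hij
        by_contra h
        exact absurd (Finset.le_max' _ i (by simp [h])) (not_le.mpr hij)
      refine ⟨fun i => if i < j then (x i * (x j)⁻¹) ^ (s + 1) else 0, fun t => ?_⟩
      apply Finset.mem_coe.mpr
      apply Finset.mem_biUnion.mpr
      refine ⟨(j, t * x j), Finset.mem_univ _, ?_⟩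
      simp only [T, Finset.mem_filter, Finset.mem_univ, true_and]
      refine ⟨?_, ?_, ?_⟩
      · rw [if_neg (lt_irrefl j)]; ring
      · intro i hij
        rw [if_neg (fun h => absurd (lt_trans h hij) (lt_irrefl i)), hzero i hij]
        ring
      · intro i hij
        rw [if_pos hij]
        apply Finset.mem_image.mpr
        refine ⟨x i * (x j)⁻¹, Finset.mem_univ _, ?_⟩
        field_simp
  · -- cardinality
    rw [Set.ncard_coe_finset]
    have hT : ∀ (j : Fin n) (τ : F), (T j τ).card ≤ A ^ (j : ℕ) := by
      intro j τ
      have hinj : (T j τ).card ≤ ((D τ).card) ^ (j : ℕ) := by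
        have hmaps : ∀ z ∈ T j τ,
            (fun i : Fin (j : ℕ) => z (Fin.castLE j.isLt.le i)) ∈
              Fintype.piFinset (fun _ : Fin (j : ℕ) => D τ) := by
          intro z hz
          rw [Fintype.mem_piFinset]
          intro i
          simp only [T, Finset.mem_filter, Finset.mem_univ, true_and] at hz
          exact hz.2.2 _ (by simpa [Fin.lt_def] using i.isLt)
        have hInj : Set.InjOn (fun (z : Fin n → F) (i : Fin (j : ℕ)) => z (Fin.castLE j.isLt.le i))
            ↑(T j τ) := by
          intro z1 hz1 z2 hz2 he
          simp only [T, Finset.mem_coe, Finset.mem_filter, Finset.mem_univ, true_and]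
            at hz1 hz2
          funext i
          rcases lt_trichotomy i j with h | h | h
          · have h2 := congrFun he ⟨(i : ℕ), h⟩
            exact h2
          · rw [h, hz1.1, hz2.1]
          · rw [hz1.2.1 i h, hz2.2.1 i h]
        calc (T j τ).card ≤ (Fintype.piFinset (fun _ : Fin (j : ℕ) => D τ)).card :=
              Finset.card_le_card_of_injOn _ hmaps hInj
        _ = ((D τ).card) ^ (j : ℕ) := by
              rw [Fintype.card_piFinset]
              simp
      exact le_trans hinj (Nat.pow_le_pow_left (hDA τ) _)
    have hK : Kf.card ≤ s * s * ∑ k ∈ Finset.range n, A ^ k := by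
      calc Kf.card ≤ ∑ p ∈ Finset.univ, (T (p : Fin n × F).1 p.2).card :=
            Finset.card_biUnion_le
      _ ≤ ∑ p ∈ (Finset.univ : Finset (Fin n × F)), A ^ ((p.1 : ℕ)) :=
            Finset.sum_le_sum (fun p _ => hT p.1 p.2)
      _ = ∑ j : Fin n, ∑ _τ : F, A ^ (j : ℕ) := by rw [Fintype.sum_prod_type]
      _ = ∑ j : Fin n, (s * s) * A ^ (j : ℕ) := by
            apply Finset.sum_congr rfl
            intro j _
            rw [Finset.sum_const, Finset.card_univ, hcard, smul_eq_mul]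
      _ = s * s * ∑ j : Fin n, A ^ (j : ℕ) := by rw [← Finset.mul_sum]
      _ = s * s * ∑ k ∈ Finset.range n, A ^ k := by rw [Fin.sum_univ_eq_sum_range]
    -- pass to the reals
    have hsR : ((2 : ℝ) ^ (m / 2)) = (s : ℝ) := by
      have : m / 2 = r := by omega
      rw [this, hsdef]
      push_cast
      ring
    have hqR : ((2 : ℝ) ^ m) = (s : ℝ) * s := by
      rw [hm2, pow_add, hsdef]
      push_cast
      ring
    have hAR : (A : ℝ) = ((s : ℝ) * s + s) / 2 := by
      have : (s : ℝ) * (s + 1) = 2 * A := by exact_mod_cast congrArg Nat.cast hA2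
      field_simp
      linarith
    have hA1R : (1 : ℝ) < A := by exact_mod_cast (by omega : 1 < A)
    have hgeom : ∑ k ∈ Finset.range n, (A : ℝ) ^ k = ((A : ℝ) ^ n - 1) / ((A : ℝ) - 1) :=
      geom_sum_eq (ne_of_gt hA1R) n
    have hKR : (Kf.card : ℝ) ≤ (s : ℝ) * s * (((A : ℝ) ^ n - 1) / ((A : ℝ) - 1)) := by
      rw [← hgeom]
      exact_mod_cast hK
    rw [hsR, hqR]
    have hs0 : (0 : ℝ) < (s : ℝ) := by exact_mod_cast (by omega : (0:ℕ) < s)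
    have hden : (0 : ℝ) < (A : ℝ) - 1 := by linarith [hA1R]
    have hrhs : 2 * ((s:ℝ) * s) / ((s:ℝ) * s + (s:ℝ) - 2) * (((s:ℝ) * s + s) / 2) ^ n
        = (s:ℝ) * s * ((A:ℝ) ^ n / ((A:ℝ) - 1)) := by
      have hden2 : (s:ℝ) * s + (s:ℝ) - 2 = 2 * ((A:ℝ) - 1) := by rw [hAR]; ring
      have hA' : ((s:ℝ) * s + s) / 2 = (A:ℝ) := hAR.symm
      rw [hden2, hA']
      field_simp
    rw [hrhs]
    refine lt_of_le_of_lt hKR ?_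
    have hpow : ((A:ℝ) ^ n - 1) / ((A:ℝ) - 1) < (A:ℝ) ^ n / ((A:ℝ) - 1) :=
      (div_lt_div_iff_of_pos_right hden).mpr (by linarith)
    exact mul_lt_mul_of_pos_left hpow (mul_pos hs0 hs0)
end

section
/- Let q = 2^m, let t ∈ F_q^*, and define g_t(x) = x^4 + x^3 + t·x on F_q. Let ω_t(3) denote the number of elements y ∈ F_q having exactly three preimages under g_t. If the absolute trace Tr(t) = 0, then ω_t(3) = 1; if Tr(t) = 1, then ω_t(3) = 0. -/
section AlgebraLemmas

variable {F : Type*} [Field F]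

/-- Pairwise relation between two elements of the same fiber of `g_t`. -/
lemma pairP (htwo : (2:F) = 0) {t y a b : F} (hne : a ≠ b)
    (ha : a^4 + a^3 + t*a = y) (hb : b^4 + b^3 + t*b = y) :
    a*b = (a+b)^3 + (a+b)^2 + t := by
  have h0 : (a - b) * (a*b - ((a+b)^3 + (a+b)^2 + t)) = 0 := by
    linear_combination ha - hb +
      (b*t + b^3 + b^4 - 1*a*t + a*b^3 - 1*a^3 - 1*a^3*b - 1*a^4) * htwo
  rcases mul_eq_zero.mp h0 with h | h
  · exact absurd (sub_eq_zero.mp h) hne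
  · exact sub_eq_zero.mp h

/-- If `a`, `b`, `c` are three distinct elements of a fiber of `g_t`, then
`a+b+c+1` is also in the fiber. -/
lemma fourth (htwo : (2:F) = 0) {t y a b c : F}
    (hab : a ≠ b) (hac : a ≠ c) (hbc : b ≠ c)
    (ha : a^4 + a^3 + t*a = y) (hb : b^4 + b^3 + t*b = y) (hc : c^4 + c^3 + t*c = y) :
    (a+b+c+1)^4 + (a+b+c+1)^3 + t*(a+b+c+1) = y := by
  have hPab := pairP htwo hab ha hb
  have hPac := pairP htwo hac ha hc
  have hPbc := pairP htwo hbc hb hc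
  have h20 : (b - c) * ((a*b + a*c + b*c) - ((a+b+c)^2 + (a+b+c))) = 0 := by
    linear_combination hPab - hPac + (-1*a*c^2 + a*b^2 - 1*a^2*c + a^2*b) * htwo
  have hR2 : a*b + a*c + b*c = (a+b+c)^2 + (a+b+c) :=
    sub_eq_zero.mp ((mul_eq_zero.mp h20).resolve_left (sub_ne_zero.mpr hbc))
  have hR3 : a*b*c = (a+b+c)^3 + (a+b+c) + t := by
    linear_combination hPab + hPac + hPbc + (1 + (a+b+c)) * hR2 +
      (t + 2*c^2 + c^3 + 2*b*c + b*c^2 + 2*b^2 + b^2*c + b^3 + 2*a*c + a*c^2 + 2*a*b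
        - 1*a*b*c + a*b^2 + 2*a^2 + a^2*c + a^2*b + a^3) * htwo
  have hRA : a^3 + (a+b+c)*a^2 + ((a+b+c)^2 + (a+b+c))*a + ((a+b+c)^3 + (a+b+c) + t) = 0 := by
    linear_combination a * hR2 + hR3 +
      (t + c + c^3 + b + 3*b*c^2 + 3*b^2*c + b^3 + a + a*c + 4*a*c^2 + a*b + 7*a*b*c
        + 4*a*b^2 + a^2 + 5*a^2*c + 5*a^2*b + 3*a^3) * htwo
  linear_combination (a + (a+b+c) + 1) * hRA + ha +
    (1 + 3*c + 4*c^2 + 2*c^3 + 3*b + 8*b*c + 6*b*c^2 + 4*b^2 + 6*b^2*c + 2*b^3 + 3*a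
      - 1*a*t + 7*a*c + 5*a*c^2 - 1*a*c^3 + 7*a*b + 10*a*b*c - 3*a*b*c^2 + 5*a*b^2
      - 3*a*b^2*c - 1*a*b^3 + 3*a^2 + 3*a^2*c - 4*a^2*c^2 + 3*a^2*b - 8*a^2*b*c
      - 4*a^2*b^2 - 1*a^3 - 6*a^3*c - 6*a^3*b - 4*a^4) * htwo

/-- If a fiber contains two distinct elements summing to `1`, then it is the fiber
over `t^2`. -/
lemma pair1 (htwo : (2:F) = 0) {t y x1 x2 : F} (hne : x1 ≠ x2) (hsum : x1 + x2 = 1)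
    (h1 : x1^4 + x1^3 + t*x1 = y) (h2 : x2^4 + x2^3 + t*x2 = y) : y = t^2 := by
  have hP := pairP htwo hne h1 h2
  have hx2 : x2 = 1 - x1 := by linear_combination hsum
  subst hx2
  linear_combination (x1^2 + t) * hP - h1 + (t + x1^2 + x1^2*t + x1^4) * htwo

/-- Factorization of the fiber over `t^2`. -/
lemma fiber_t2 (htwo : (2:F) = 0) {t s : F} (hs : s^2 = t) (x : F) :
    (x^4 + x^3 + t*x = t^2) ↔ (x = s ∨ x^2 + x = t) := by
  have key : x^4 + x^3 + t*x - t^2 = (x - s)^2 * (x^2 + x - t) := by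
    linear_combination (x + x^2 + t) * hs +
      (s*x^2 + s*x^3 - 1*s^2*x - 1*s^2*x^2 + t*x + t*x^2 - 1*t*s*x) * htwo
  constructor
  · intro h
    have h0 : (x - s)^2 * (x^2 + x - t) = 0 := by rw [← key, h]; ring
    rcases mul_eq_zero.mp h0 with h' | h'
    · exact Or.inl (sub_eq_zero.mp (pow_eq_zero_iff (two_ne_zero) |>.mp h'))
    · exact Or.inr (by linear_combination h')
  · rintro (rfl | h)
    · linear_combination (x + x^2 + t) * hs + (t*x) * htwo
    · linear_combination (x^2 + t) * h
end AlgebraLemmas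

section TraceLemmas

variable (m : ℕ)

local notation "K" => GaloisField 2 m

lemma Ktwo : (2 : K) = 0 := by
  have : ((2 : ℕ) : K) = 0 := CharP.cast_eq_zero K 2
  simpa using this

/-- The Frobenius as an algebra automorphism of `K` over `ZMod 2`. -/
noncomputable def frobAut : K ≃ₐ[ZMod 2] K :=
  AlgEquiv.ofRingEquiv (f := frobeniusEquiv K 2) (fun c => by
    have : c^2 = c := by revert c; decide
    rw [frobeniusEquiv_def, ← map_pow, this])

lemma trace_sq (x : K) :
    Algebra.trace (ZMod 2) K (x^2) = Algebra.trace (ZMod 2) K x := by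
  apply (algebraMap (ZMod 2) K).injective
  rw [trace_eq_sum_automorphisms, trace_eq_sum_automorphisms]
  have h1 : ∀ σ : K ≃ₐ[ZMod 2] K, σ (x^2) = (σ * frobAut m) x := fun σ => rfl
  rw [Finset.sum_congr rfl (fun σ _ => h1 σ)]
  exact Fintype.sum_bijective (· * frobAut m) (Group.mulRight_bijective _)
    _ _ (fun σ => rfl)

/-- Additive Hilbert 90 / Artin–Schreier: trace-zero elements are of the form
`r^2 + r`. -/
lemma artin_schreier {x : K} (hx : Algebra.trace (ZMod 2) K x = 0) :
    ∃ r : K, r^2 + r = x := by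
  classical
  have htwo := Ktwo m
  set f : K →+ K := (frobenius K 2).toAddMonoidHom - AddMonoidHom.id K with hfdef
  have hf : ∀ z, f z = z^2 - z := fun z => rfl
  set T : K →+ ZMod 2 := (Algebra.trace (ZMod 2) K).toAddMonoidHom with hTdef
  have hT : ∀ z, T z = Algebra.trace (ZMod 2) K z := fun z => rfl
  have hTsurj : Function.Surjective T := Algebra.trace_surjective (ZMod 2) K
  -- the range of f is contained in the kernel of T
  have hsub : (f.range : Set K) ⊆ (T.ker : Set K) := by
    rintro _ ⟨z, rfl⟩
    have : T (f z) = 0 := by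
      rw [hT, hf z, map_sub, trace_sq]
      exact sub_self _
    exact this
  -- kernel of f is {0, 1}
  have hkerf : (f.ker : Set K) = {0, 1} := by
    ext z
    simp only [SetLike.mem_coe, AddMonoidHom.mem_ker, Set.mem_insert_iff,
      Set.mem_singleton_iff]
    rw [hf z]
    constructor
    · intro h
      have h0 : z * (z - 1) = 0 := by linear_combination h
      rcases mul_eq_zero.mp h0 with h' | h'
      · exact Or.inl h'
      · exact Or.inr (by linear_combination h')
    · rintro (rfl | rfl) <;> ring
  have hcard_kerf : Nat.card f.ker = 2 := by
    have e : Nat.card f.ker = Nat.card ({0, 1} : Set K) :=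
      Nat.card_congr (Equiv.setCongr hkerf)
    rw [e, Nat.card_coe_set_eq, Set.ncard_pair (zero_ne_one)]
  have hcard1 : Nat.card K = Nat.card f.range * 2 := by
    have e1 : Nat.card (K ⧸ f.ker) = Nat.card f.range :=
      Nat.card_congr (QuotientAddGroup.quotientKerEquivRange f).toEquiv
    have e2 := AddSubgroup.card_eq_card_quotient_mul_card_addSubgroup f.ker
    rw [e2, e1, hcard_kerf]
  have hcard2 : Nat.card K = 2 * Nat.card T.ker := by
    have e1 : Nat.card (K ⧸ T.ker) = Nat.card (ZMod 2) :=
      Nat.card_congr (QuotientAddGroup.quotientKerEquivOfSurjective T hTsurj).toEquiv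
    have e2 := AddSubgroup.card_eq_card_quotient_mul_card_addSubgroup T.ker
    rw [e2, e1]
    simp [Nat.card_eq_fintype_card]
  have hfin : Nat.card K ≠ 0 := Nat.card_pos.ne'
  have hcards : Nat.card T.ker ≤ Nat.card f.range := by omega
  have hset : (f.range : Set K) = (T.ker : Set K) := by
    apply Set.eq_of_subset_of_ncard_le hsub _ (Set.toFinite _)
    rw [← Nat.card_coe_set_eq, ← Nat.card_coe_set_eq]
    exact hcards
  have hxmem : x ∈ (T.ker : Set K) := by
    show T x = 0
    rw [hT]; exact hx
  rw [← hset] at hxmem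
  obtain ⟨z, hz⟩ := hxmem
  refine ⟨z, ?_⟩
  have hz' : z^2 - z = x := by rw [← hf z]; exact hz
  linear_combination hz' + z * htwo

end TraceLemmas

/-- For `q = 2^m` and `t ∈ F_q^*`, with `g_t(x) = x^4 + x^3 + t·x`, the number `ω_t(3)`
of elements of `F_q` with exactly three preimages under `g_t` is `1` if the absolute
trace of `t` is `0`, and `0` if it is `1`. -/
theorem omega_three (m : ℕ) (hm : 0 < m) (t : GaloisField 2 m) (ht : t ≠ 0) :
    (Algebra.trace (ZMod 2) (GaloisField 2 m) t = 0 →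
      {y : GaloisField 2 m |
        {x : GaloisField 2 m | x ^ 4 + x ^ 3 + t * x = y}.ncard = 3}.ncard = 1) ∧
    (Algebra.trace (ZMod 2) (GaloisField 2 m) t = 1 →
      {y : GaloisField 2 m |
        {x : GaloisField 2 m | x ^ 4 + x ^ 3 + t * x = y}.ncard = 3}.ncard = 0) := by
  have htwo := Ktwo m
  -- a square root of t
  obtain ⟨s, hs⟩ : ∃ s : GaloisField 2 m, s^2 = t :=
    ⟨(frobeniusEquiv (GaloisField 2 m) 2).symm t, by
      simpa [frobeniusEquiv_def] using
        (frobeniusEquiv (GaloisField 2 m) 2).apply_symm_apply t⟩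
  -- Key fact A: any fiber with exactly three elements is the fiber over t^2
  have keyA : ∀ y : GaloisField 2 m,
      {x : GaloisField 2 m | x ^ 4 + x ^ 3 + t * x = y}.ncard = 3 → y = t^2 := by
    intro y h3
    rw [Set.ncard_eq_three] at h3
    obtain ⟨a, b, c, hab, hac, hbc, hset⟩ := h3
    have ha : a^4 + a^3 + t*a = y := by
      have : a ∈ ({a, b, c} : Set (GaloisField 2 m)) := by simp
      rw [← hset] at this; exact this
    have hb : b^4 + b^3 + t*b = y := by
      have : b ∈ ({a, b, c} : Set (GaloisField 2 m)) := by simp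
      rw [← hset] at this; exact this
    have hc : c^4 + c^3 + t*c = y := by
      have : c ∈ ({a, b, c} : Set (GaloisField 2 m)) := by simp
      rw [← hset] at this; exact this
    by_cases hd : a+b+c+1 = a ∨ a+b+c+1 = b ∨ a+b+c+1 = c
    · rcases hd with h | h | h
      · have hsum : b + c = 1 := by linear_combination h - htwo
        exact pair1 htwo hbc hsum hb hc
      · have hsum : a + c = 1 := by linear_combination h - htwo
        exact pair1 htwo hac hsum ha hc
      · have hsum : a + b = 1 := by linear_combination h - htwo
        exact pair1 htwo hab hsum ha hb
    · push_neg at hd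
      obtain ⟨h1, h2, h3'⟩ := hd
      have hgd := fourth htwo hab hac hbc ha hb hc
      have hmem : a+b+c+1 ∈ {x : GaloisField 2 m | x ^ 4 + x ^ 3 + t * x = y} := hgd
      rw [hset] at hmem
      simp only [Set.mem_insert_iff, Set.mem_singleton_iff] at hmem
      tauto
  constructor
  · -- trace zero case
    intro htr
    obtain ⟨r, hr⟩ := artin_schreier m htr
    -- the fiber over t^2 is {s, r, r+1}
    have hfib : {x : GaloisField 2 m | x ^ 4 + x ^ 3 + t * x = t^2}
        = {s, r, r+1} := by
      ext x
      simp only [Set.mem_setOf_eq, Set.mem_insert_iff, Set.mem_singleton_iff]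
      rw [fiber_t2 htwo hs x]
      constructor
      · rintro (rfl | hx)
        · exact Or.inl rfl
        · have h0 : (x - r) * (x - r - 1) = 0 := by
            linear_combination hx - hr + (-1*x + r - 1*r*x + r^2) * htwo
          rcases mul_eq_zero.mp h0 with h' | h'
          · exact Or.inr (Or.inl (sub_eq_zero.mp h'))
          · exact Or.inr (Or.inr (by linear_combination h'))
      · rintro (rfl | rfl | rfl)
        · exact Or.inl rfl
        · exact Or.inr hr
        · exact Or.inr (by linear_combination hr + (1 + r) * htwo)
    have hr1 : (r+1)^2 + (r+1) = t := by linear_combination hr + (1 + r) * htwo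
    have hsr : s ≠ r := by
      intro h
      have h1 : r^2 = t := by rw [← h]; exact hs
      have h2 : r = 0 := by linear_combination hr - h1
      apply ht
      rw [← h1, h2]; ring
    have hsr1 : s ≠ r + 1 := by
      intro h
      have h1 : (r+1)^2 = t := by rw [← h]; exact hs
      have h2 : r + 1 = 0 := by linear_combination hr1 - h1
      apply ht
      rw [← h1, h2]; ring
    have hrr1 : r ≠ r + 1 := by
      intro h
      have : (1 : GaloisField 2 m) = 0 := by linear_combination -h
      exact one_ne_zero this
    have hmem3 : {x : GaloisField 2 m | x ^ 4 + x ^ 3 + t * x = t^2}.ncard = 3 := by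
      rw [hfib]
      exact Set.ncard_eq_three.mpr ⟨s, r, r+1, hsr, hsr1, hrr1, rfl⟩
    have houter : {y : GaloisField 2 m |
        {x : GaloisField 2 m | x ^ 4 + x ^ 3 + t * x = y}.ncard = 3} = {t^2} := by
      apply Set.eq_singleton_iff_unique_mem.mpr
      exact ⟨hmem3, fun y hy => keyA y hy⟩
    rw [houter, Set.ncard_singleton]
  · -- trace one case
    intro htr
    have hfib : {x : GaloisField 2 m | x ^ 4 + x ^ 3 + t * x = t^2} = {s} := by
      ext x
      simp only [Set.mem_setOf_eq, Set.mem_singleton_iff]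
      rw [fiber_t2 htwo hs x]
      constructor
      · rintro (rfl | hx)
        · rfl
        · exfalso
          have h0 : Algebra.trace (ZMod 2) (GaloisField 2 m) (x^2 + x) = 0 := by
            rw [map_add, trace_sq]
            exact CharTwo.add_self_eq_zero _
          rw [hx, htr] at h0
          exact one_ne_zero h0
      · rintro rfl; exact Or.inl rfl
    have houter : {y : GaloisField 2 m |
        {x : GaloisField 2 m | x ^ 4 + x ^ 3 + t * x = y}.ncard = 3} = ∅ := by
      rw [Set.eq_empty_iff_forall_notMem]
      intro y hy
      have hy3 : {x : GaloisField 2 m | x ^ 4 + x ^ 3 + t * x = y}.ncard = 3 := hy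
      have := keyA y hy3
      rw [this] at hy3
      rw [hfib, Set.ncard_singleton] at hy3
      omega
    rw [houter, Set.ncard_empty]
end

section
/- Let q = 2^m with m odd, and define g_0(x) = x^4 + x^3 on F_q. Then for every integer k ≥ 1, the number ω_0(k) of elements of F_q with exactly k preimages under g_0 satisfies: ω_0(2) = q/2 and ω_0(k) = 0 for all k ≥ 1 with k ≠ 2. In particular, the image set {x^4 + x^3 : x ∈ F_q} has cardinality q/2. -/
section Aux

variable {F : Type*} [Field F] [Fintype F]

/-- In char 2 with `X^2+X+1` having no root, `t ↦ t^3+t^2+t` is injective. -/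
lemma cube_map_injective (h2 : (2:F) = 0) (hirr : ∀ a : F, a^2+a+1 ≠ 0) :
    Function.Injective (fun t : F => t^3+t^2+t) := by
  intro a b hab
  by_contra hne
  have hd : a - b ≠ 0 := sub_ne_zero.mpr hne
  have hK : a^2+a*b+b^2+a+b+1 = 0 := by
    have h0 : (a-b)*(a^2+a*b+b^2+a+b+1) = 0 := by linear_combination hab
    rcases mul_eq_zero.mp h0 with h | h
    · exact absurd h hd
    · exact h
  apply hirr ((a+1)/(a-b))
  have hnum : (a+1)^2 + (a+1)*(a-b) + (a-b)^2 = 0 := by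
    linear_combination hK + (a^2 - 2*a*b + a - b) * h2
  have hrw : ((a+1)/(a-b))^2 + ((a+1)/(a-b)) + 1
      = ((a+1)^2 + (a+1)*(a-b) + (a-b)^2)/(a-b)^2 := by
    field_simp
  rw [hrw, hnum, zero_div]

/-- Key pairing lemma: every fiber of `x ↦ x^4+x^3` is a pair. -/
lemma fiber_pair (h2 : (2:F) = 0) (hirr : ∀ a : F, a^2+a+1 ≠ 0) (x : F) :
    ∃ z : F, z ≠ x ∧ ∀ y : F, (y^4+y^3 = x^4+x^3 ↔ (y = x ∨ y = z)) := by
  have hinj := cube_map_injective h2 hirr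
  obtain ⟨t, ht⟩ := (Finite.injective_iff_surjective.mp hinj) x
  simp only at ht
  refine ⟨x + (t^2+t+1), ?_, ?_⟩
  · intro h
    have : t^2+t+1 = 0 := by linear_combination h
    exact hirr t this
  · intro y
    constructor
    · intro H
      by_cases hyx : y = x
      · exact Or.inl hyx
      right
      have hd : y - x ≠ 0 := sub_ne_zero.mpr hyx
      have hQ0 : (y-x)*((y-x)^3+(y-x)^2+x*(y-x)+x^2) = 0 := by
        linear_combination H - (x*y^2 + 2*x*y^3 - x^2*y - 3*x^2*y^2 + 2*x^3*y - x^4) * h2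
      have hK : (y-x)^3+(y-x)^2+x*(y-x)+x^2 = 0 := by
        rcases mul_eq_zero.mp hQ0 with h | h
        · exact absurd h hd
        · exact h
      set u : F := x / (y - x) with hu_def
      have hx_eq : x = u * (y - x) := (div_mul_cancel₀ x hd).symm
      have hdu : y - x = u^2 + u + 1 := by
        have hK' : (y-x)^3 = x^2 + x*(y-x) + (y-x)^2 := by
          linear_combination hK + ((y-x)^2 + x*(y-x) + x^2 + 2*x*y - 2*y^2 - 2*x^2) * h2
        rw [hu_def]
        field_simp
        linear_combination hK'
      have hhu : u^3 + u^2 + u = x := by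
        rw [hx_eq, hdu]; ring
      have hut : u = t := hinj (by simpa [hhu] using ht.symm)
      have : y = x + (u^2 + u + 1) := by rw [← hdu]; ring
      rw [this, hut]
    · rintro (rfl | rfl)
      · rfl
      · rw [← ht]
        linear_combination (1 + 7*t + 25*t^2 + 59*t^3 + 102*t^4 + 135*t^5 + 140*t^6
          + 114*t^7 + 72*t^8 + 34*t^9 + 11*t^10 + 2*t^11) * h2

end Aux

/-- For `q = 2^m` with `m` odd and `g_0(x) = x^4 + x^3` on `F_q`: `ω_0(2) = q/2`,
`ω_0(k) = 0` for every `k ≥ 1` with `k ≠ 2`, and the image set `{x^4 + x^3 : x ∈ F_q}`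
has cardinality `q/2`. -/
theorem omega_zero_m_odd (m : ℕ) (hm : Odd m)
    (F : Type*) [Field F] [Fintype F] (hF : Fintype.card F = 2 ^ m) :
    (({y : F | {x : F | x ^ 4 + x ^ 3 = y}.ncard = 2}.ncard : ℚ) = 2 ^ m / 2) ∧
    (∀ k : ℕ, 1 ≤ k → k ≠ 2 →
      {y : F | {x : F | x ^ 4 + x ^ 3 = y}.ncard = k}.ncard = 0) ∧
    (((Set.range fun x : F => x ^ 4 + x ^ 3).ncard : ℚ) = 2 ^ m / 2) := by
  classical
  have hm0 : m ≠ 0 := by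
    rintro rfl; rw [Nat.odd_iff] at hm; simp at hm
  -- characteristic 2
  have h2 : (2:F) = 0 := by
    have hc : ((Fintype.card F : F)) = 0 := FiniteField.cast_card_eq_zero F
    rw [hF] at hc
    push_cast at hc
    exact pow_eq_zero_iff hm0 |>.mp hc
  -- X^2+X+1 has no root
  have hirr : ∀ a : F, a^2+a+1 ≠ 0 := by
    intro a ha
    have ha0 : a ≠ 0 := by
      rintro rfl; simp at ha
    have ha1 : a ≠ 1 := by
      rintro rfl
      have h3 : (3:F) = 0 := by linear_combination ha
      have h1 : (1:F) = 0 := by linear_combination h3 - h2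
      exact one_ne_zero h1
    have ha3 : a^3 = 1 := by linear_combination (a-1)*ha
    set u : Fˣ := Units.mk0 a ha0 with hu
    have hu3 : u^3 = 1 := by
      ext; simpa [hu] using ha3
    have hou : orderOf u = 3 := by
      have hdvd : orderOf u ∣ 3 := orderOf_dvd_of_pow_eq_one hu3
      rcases (Nat.prime_three).eq_one_or_self_of_dvd _ hdvd with h | h
      · exfalso
        have : u = 1 := orderOf_eq_one_iff.mp h
        apply ha1
        have := congrArg Units.val this
        simpa [hu] using this
      · exact h
    have hcard : orderOf u ∣ Fintype.card Fˣ := orderOf_dvd_card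
    rw [Fintype.card_units, hF, hou] at hcard
    obtain ⟨k, hk⟩ := hm
    have hpow : 2^m = 2 * 4^k := by
      rw [hk, pow_succ, pow_mul]; norm_num; ring
    rw [hpow] at hcard
    have h4 : 4^k % 3 = 1 := by simp [Nat.pow_mod]
    have h4p : 0 < 4^k := Nat.pow_pos (by norm_num)
    omega
  have key := fiber_pair h2 hirr
  -- fibers over the range have exactly two elements
  have fib2 : ∀ v : F, v ∈ Set.range (fun x : F => x ^ 4 + x ^ 3) →
      {x : F | x ^ 4 + x ^ 3 = v}.ncard = 2 := by
    rintro v ⟨x, rfl⟩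
    obtain ⟨z, hz, hyp⟩ := key x
    have hset : {y : F | y ^ 4 + y ^ 3 = x ^ 4 + x ^ 3} = {x, z} := by
      ext y
      simp [hyp y]
    simp only at hset ⊢
    rw [hset]
    exact Set.ncard_pair (Ne.symm hz)
  -- the first characteristic set equals the range
  have hset2 : {y : F | {x : F | x ^ 4 + x ^ 3 = y}.ncard = 2}
      = Set.range (fun x : F => x ^ 4 + x ^ 3) := by
    ext v
    constructor
    · intro hv
      by_contra hvr
      have hemp : {x : F | x ^ 4 + x ^ 3 = v} = ∅ := by
        ext x
        simp only [Set.mem_setOf_eq, Set.mem_empty_iff_false, iff_false]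
        intro h
        exact hvr ⟨x, h⟩
      rw [Set.mem_setOf_eq, hemp] at hv
      simp at hv
    · intro hv
      exact fib2 v hv
  -- Finset counting
  let I : Finset F := Finset.univ.image (fun x : F => x ^ 4 + x ^ 3)
  have hIcoe : Set.range (fun x : F => x ^ 4 + x ^ 3) = ↑I := by
    simp [I]
  have hfibcard : ∀ v ∈ I, (Finset.univ.filter (fun x : F => x ^ 4 + x ^ 3 = v)).card = 2 := by
    intro v hv
    rw [Finset.mem_image] at hv
    obtain ⟨x, -, rfl⟩ := hv
    obtain ⟨z, hz, hyp⟩ := key x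
    have : (Finset.univ.filter (fun y : F => y ^ 4 + y ^ 3 = x ^ 4 + x ^ 3)) = {x, z} := by
      ext y
      simp [hyp y]
    rw [this]
    exact Finset.card_pair (Ne.symm hz)
  have hcount : Fintype.card F = 2 * I.card := by
    rw [← Finset.card_univ,
      Finset.card_eq_sum_card_fiberwise (f := fun x : F => x ^ 4 + x ^ 3) (t := I)
        (fun x _ => Finset.mem_image_of_mem _ (Finset.mem_univ x))]
    rw [Finset.sum_congr rfl hfibcard, Finset.sum_const, smul_eq_mul]
    ring
  have hIQ : ((I.card : ℚ)) = 2 ^ m / 2 := by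
    have : (2:ℚ) * I.card = 2 ^ m := by
      have := hcount
      rw [hF] at this
      exact_mod_cast this.symm
    field_simp
    linarith
  refine ⟨?_, ?_, ?_⟩
  · rw [hset2, hIcoe, Set.ncard_coe_finset]
    exact hIQ
  · intro k hk1 hk2
    have : {y : F | {x : F | x ^ 4 + x ^ 3 = y}.ncard = k} = ∅ := by
      ext v
      simp only [Set.mem_setOf_eq, Set.mem_empty_iff_false, iff_false]
      intro hv
      have hne : {x : F | x ^ 4 + x ^ 3 = v}.Nonempty := by
        apply Set.nonempty_of_ncard_ne_zero
        omega
      obtain ⟨x, hx⟩ := hne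
      have : v ∈ Set.range (fun x : F => x ^ 4 + x ^ 3) := ⟨x, hx⟩
      rw [fib2 v this] at hv
      omega
    rw [this, Set.ncard_empty]
  · rw [hIcoe, Set.ncard_coe_finset]
    exact hIQ
end

section
/- Let q = 2^m with m even, and define g_0(x) = x^4 + x^3 on F_q. Then for every integer k ≥ 1, the number ω_0(k) of elements of F_q with exactly k preimages under g_0 satisfies: ω_0(1) = 2(q−1)/3, ω_0(2) = 1, ω_0(4) = (q−4)/12, and ω_0(k) = 0 for all other k ≥ 1. -/
namespace OmegaZeroAux

open Finset
set_option linter.unusedSectionVars false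

variable {F : Type*} [Field F] [Fintype F] [DecidableEq F]

lemma char2_cases (h2 : (2:F) = 0) {s x w : F} (hx : w * w + s * w = x * x + s * x) :
    w = x ∨ w = x + s := by
  have h : (w + x) * (w + x + s) = 0 := by
    linear_combination hx + (w*x + x*x + x*s) * h2
  rcases mul_eq_zero.1 h with h | h
  · left; linear_combination h - x * h2
  · right; linear_combination h - (x + s) * h2

lemma T_fiber_eq (h2 : (2:F) = 0) {a x0 : F} (hx0 : x0*x0 + x0 = a) :
    univ.filter (fun x : F => x*x + x = a) = {x0, x0+1} := by
  ext w
  simp only [mem_filter, mem_univ, true_and, mem_insert, mem_singleton]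
  constructor
  · intro hw
    exact char2_cases h2 (s := 1) (by linear_combination hw - hx0)
  · rintro (rfl | rfl)
    · exact hx0
    · linear_combination hx0 + (x0+1)*h2

lemma T_fiber_card (h2 : (2:F) = 0) {a x0 : F} (hx0 : x0*x0 + x0 = a) :
    (univ.filter (fun x : F => x*x + x = a)).card = 2 := by
  rw [T_fiber_eq h2 hx0]
  exact card_pair (by
    intro h
    exact one_ne_zero (by linear_combination -h : (1:F) = 0))

lemma card_H (h2 : (2:F) = 0) :
    2 * ((univ : Finset F).image (fun x : F => x*x+x)).card = Fintype.card F := by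
  have h := Finset.card_eq_sum_card_image (fun x : F => x*x+x) univ
  rw [Finset.card_univ] at h
  rw [h, Finset.sum_congr rfl (fun a ha => ?_), Finset.sum_const, smul_eq_mul, mul_comm]
  obtain ⟨x0, -, hx0⟩ := Finset.mem_image.1 ha
  exact T_fiber_card h2 hx0


lemma fiber_zero (h2 : (2:F) = 0) :
    univ.filter (fun w : F => w^4 + w^3 = 0) = {0, 1} := by
  ext w
  simp only [mem_filter, mem_univ, true_and, mem_insert, mem_singleton]
  constructor
  · intro hw
    have h : w^3 * (w+1) = 0 := by linear_combination hw
    rcases mul_eq_zero.1 h with h | h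
    · exact Or.inl (by simpa using h)
    · exact Or.inr (by linear_combination h - h2)
  · rintro (rfl | rfl)
    · norm_num
    · linear_combination h2

lemma fiber_card_four (h2 : (2:F) = 0) (hc : ∃ c : F, c*c + c = 1) {y : F} (hy : y ≠ 0)
    {x z : F} (hxz : x ≠ z) (hgx : x^4 + x^3 = y) (hgz : z^4 + z^3 = y) :
    (univ.filter (fun w : F => w^4 + w^3 = y)).card = 4 := by
  obtain ⟨c, hcc⟩ := hc
  set s := x + z with hs_def
  have hzxs : z = x + s := by rw [hs_def]; linear_combination -x*h2
  have hs : s ≠ 0 := by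
    intro h
    rw [h, add_zero] at hzxs
    exact hxz hzxs.symm
  have hgz' : (x+s)^4 + (x+s)^3 = y := by rw [← hzxs]; exact hgz
  clear hzxs hxz hgz hs_def
  clear_value s
  have key : s * (x*x + s*x + s^3 + s^2) = 0 := by
    linear_combination hgz' - hgx + (-2*x^3*s - 3*x^2*s^2 - x^2*s - 2*x*s^3 - x*s^2)*h2
  have E1 : x*x + s*x + s^3 + s^2 = 0 := by
    rcases mul_eq_zero.1 key with h | h
    · exact absurd h hs
    · exact h
  have hy2 : y = s^3*(s+1)^3 := by
    linear_combination -hgx + (x^2 - x*s + x - s^3 - s)*E1 + (x*s^4 - s^5 - s^4)*h2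
  have hs1 : s ≠ 1 := by
    intro h
    apply hy
    rw [h] at hy2
    linear_combination hy2 + 4*h2
  have ht : s + 1 ≠ 0 := fun h => hs1 (by linear_combination h - h2)
  have hinv : s * s⁻¹ = 1 := mul_inv_cancel₀ hs
  have ha : (x*s⁻¹)*(x*s⁻¹) + (x*s⁻¹) = s + 1 := by
    have h := mul_left_cancel₀ (pow_ne_zero 2 hs)
      (show s^2 * ((x*s⁻¹)*(x*s⁻¹) + (x*s⁻¹)) = s^2*(s+1) by
        linear_combination (s⁻¹*x^2*s + x^2 + x*s)*hinv + E1 + (-s^3 - s^2)*h2)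
    exact h
  obtain ⟨b, hb⟩ : ∃ b : F, b*b + b = s :=
    ⟨x*s⁻¹ + c, by linear_combination ha + hcc + ((x*s⁻¹)*c + 1)*h2⟩
  obtain ⟨u, hu2⟩ : ∃ u : F, u*u + (s+1)*u = (s+1)^2*s :=
    ⟨(s+1)*b, by linear_combination (s+1)^2*hb⟩
  have mem_u : u^4 + u^3 = y := by
    linear_combination (u^2 - u*s + s^3 + 3*s^2 + 2*s)*hu2 - hy2 +
      (-u*s^4 - 3*u*s^3 - 3*u*s^2 - u*s + s^5 + 3*s^4 + 3*s^3 + s^2)*h2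
  have mem_ut : (u+(s+1))^4 + (u+(s+1))^3 = y := by
    linear_combination (u^2 + 3*u*s + 4*u + s^3 + 5*s^2 + 9*s + 5)*hu2 - hy2 +
      (u*s^4 + 4*u*s^3 + 6*u*s^2 + 4*u*s + u + 2*s^5 + 9*s^4 + 16*s^3 + 14*s^2 + 6*s + 1)*h2
  have noroot : ∀ w : F, w*w + s*w + s*s*(s+1) = 0 →
      w*w + (s+1)*w + (s+1)*(s+1)*s = 0 → False := by
    intro w hq1 hq2
    have hw : w = s*s + s := by linear_combination hq2 - hq1 - (s*s+s)*h2
    rw [hw] at hq1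
    have h0 : s*s*((s+1)*(s+1)) = 0 := by linear_combination hq1 - (s^3+s^2)*h2
    rcases mul_eq_zero.1 h0 with h | h
    · exact hs (mul_self_eq_zero.1 h)
    · exact ht (mul_self_eq_zero.1 h)
  have E1' : x*x + s*x + s*s*(s+1) = 0 := by linear_combination E1
  have hu2' : u*u + (s+1)*u + (s+1)*(s+1)*s = 0 := by
    linear_combination hu2 + (s+1)*(s+1)*s*h2
  have main : univ.filter (fun w : F => w^4 + w^3 = y) = {x, x+s, u, u+(s+1)} := by
    ext w
    simp only [mem_filter, mem_univ, true_and, mem_insert, mem_singleton]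
    constructor
    · intro hw
      have hfac : (w*w + s*w + s*s*(s+1)) * (w*w + (s+1)*w + (s+1)*(s+1)*s) = 0 := by
        linear_combination hw + hy2 + (w^3*s + w^2*s^3 + 2*w^2*s^2 + w^2*s + w*s^4 +
          2*w*s^3 + w*s^2 + s^6 + 3*s^5 + 3*s^4 + s^3)*h2
      rcases mul_eq_zero.1 hfac with h | h
      · rcases char2_cases h2 (show w*w + s*w = x*x + s*x by linear_combination h - E1')
          with h' | h'
        · exact Or.inl h'
        · exact Or.inr (Or.inl h')
      · rcases char2_cases h2 (show w*w + (s+1)*w = u*u + (s+1)*u by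
            linear_combination h - hu2') with h' | h'
        · exact Or.inr (Or.inr (Or.inl h'))
        · exact Or.inr (Or.inr (Or.inr h'))
    · rintro (rfl | rfl | rfl | rfl)
      exacts [hgx, hgz', mem_u, mem_ut]
  have hxs_q : (x+s)*(x+s) + s*(x+s) + s*s*(s+1) = 0 := by
    linear_combination E1' + (x*s + s*s)*h2
  have hut_q : (u+(s+1))*(u+(s+1)) + (s+1)*(u+(s+1)) + (s+1)*(s+1)*s = 0 := by
    linear_combination hu2' + (u*(s+1) + (s+1)*(s+1))*h2
  have cross : ∀ w1 w2 : F, w1*w1 + s*w1 + s*s*(s+1) = 0 →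
      w2*w2 + (s+1)*w2 + (s+1)*(s+1)*s = 0 → w1 ≠ w2 := by
    intro w1 w2 hq1 hq2 h
    subst h
    exact noroot w1 hq1 hq2
  have dxs : x ≠ x + s := fun h => hs (by linear_combination -h)
  have dut : u ≠ u + (s+1) := fun h => ht (by linear_combination -h)
  have hcard : ({x, x+s, u, u+(s+1)} : Finset F).card = 4 := by
    rw [card_insert_of_notMem (by
        simp only [mem_insert, mem_singleton]
        push_neg
        exact ⟨dxs, cross x u E1' hu2', cross x (u+(s+1)) E1' hut_q⟩),
      card_insert_of_notMem (by
        simp only [mem_insert, mem_singleton]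
        push_neg
        exact ⟨cross (x+s) u hxs_q hu2', cross (x+s) (u+(s+1)) hxs_q hut_q⟩),
      card_insert_of_notMem (by simp only [mem_singleton]; exact dut),
      card_singleton]
  rw [main, hcard]

lemma fiber_card_cases (h2 : (2:F) = 0) (hc : ∃ c : F, c*c + c = 1) {y : F} (hy : y ≠ 0) :
    (univ.filter (fun w : F => w^4 + w^3 = y)).card = 0 ∨
    (univ.filter (fun w : F => w^4 + w^3 = y)).card = 1 ∨
    (univ.filter (fun w : F => w^4 + w^3 = y)).card = 4 := by
  by_cases h : (univ.filter (fun w : F => w^4 + w^3 = y)).card ≤ 1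
  · rcases Nat.le_one_iff_eq_zero_or_eq_one.1 h with h | h
    · exact Or.inl h
    · exact Or.inr (Or.inl h)
  · push_neg at h
    obtain ⟨a, ha, b, hb, hab⟩ := Finset.one_lt_card.1 h
    exact Or.inr (Or.inr (fiber_card_four h2 hc hy hab (mem_filter.1 ha).2 (mem_filter.1 hb).2))


lemma exists_c (m : ℕ) (hm : 0 < m) (hme : Even m) (hF : Fintype.card F = 2^m)
    (h2 : (2:F) = 0) : ∃ c : F, c*c + c = 1 := by
  haveI : Fact (Nat.Prime 3) := ⟨by norm_num⟩
  have hdvd : 3 ∣ Fintype.card Fˣ := by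
    rw [Fintype.card_units, hF]
    obtain ⟨j, hj⟩ := hme
    have h4 : (2:ℕ)^m = 4^j := by
      rw [hj, ← two_mul, pow_mul]; norm_num
    rw [h4]
    simpa using Nat.sub_dvd_pow_sub_pow 4 1 j
  obtain ⟨g, hg⟩ := exists_prime_orderOf_dvd_card 3 hdvd
  have hg3 : (g:F)^3 = 1 := by
    have h := pow_orderOf_eq_one g
    rw [hg] at h
    have h2 := congrArg (Units.val) h
    push_cast at h2
    exact h2
  have hgne : (g:F) ≠ 1 := by
    intro h
    have h1 : g = 1 := Units.val_eq_one.1 h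
    rw [h1, orderOf_one] at hg
    norm_num at hg
  have hfac : ((g:F) - 1) * ((g:F)*(g:F) + (g:F) + 1) = 0 := by linear_combination hg3
  rcases mul_eq_zero.1 hfac with h | h
  · exact absurd (sub_eq_zero.1 h) hgne
  · exact ⟨g, by linear_combination h - h2⟩

lemma sum_nu :
    ∑ y : F, (univ.filter (fun w : F => w^4 + w^3 = y)).card = Fintype.card F := by
  rw [← Finset.card_univ]
  exact (Finset.card_eq_sum_card_fiberwise (f := fun w : F => w^4+w^3)
    (fun x _ => mem_univ _)).symm

lemma cardX_A :
    ((univ : Finset (F×F)).filter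
      (fun p => p.1 ≠ p.2 ∧ p.1^4+p.1^3 = p.2^4+p.2^3)).card
      = ∑ y : F, ((univ.filter (fun w : F => w^4 + w^3 = y)).card *
          (univ.filter (fun w : F => w^4 + w^3 = y)).card -
          (univ.filter (fun w : F => w^4 + w^3 = y)).card) := by
  rw [Finset.card_eq_sum_card_fiberwise (f := fun p : F×F => p.1^4+p.1^3) (t := univ)
      (fun x _ => mem_univ _)]
  refine Finset.sum_congr rfl fun y _ => ?_
  have hset : ((univ : Finset (F×F)).filter
      (fun p => p.1 ≠ p.2 ∧ p.1^4+p.1^3 = p.2^4+p.2^3)).filter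
      (fun p => p.1^4+p.1^3 = y) = (univ.filter (fun w : F => w^4+w^3 = y)).offDiag := by
    ext p
    simp only [Finset.filter_filter, mem_filter, mem_univ, true_and, Finset.mem_offDiag]
    constructor
    · rintro ⟨⟨hne, heq⟩, h1⟩
      exact ⟨h1, by rw [← heq]; exact h1, hne⟩
    · rintro ⟨h1, hp2, hne⟩
      exact ⟨⟨hne, by rw [h1, hp2]⟩, h1⟩
  rw [hset, Finset.offDiag_card]

def Hs (F : Type*) [Field F] [Fintype F] [DecidableEq F] : Finset F :=
  (univ : Finset F).image (fun x : F => x*x+x)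

def Ys (F : Type*) [Field F] [Fintype F] [DecidableEq F] : Finset (F × F) :=
  (univ : Finset (F×F)).filter
    (fun p => p.2 ≠ 0 ∧ p.1*p.1 + p.2*p.1 + p.2^3 + p.2^2 = 0)

lemma mem_Hs {a : F} : a ∈ Hs F ↔ ∃ x : F, x*x+x = a := by
  simp [Hs]

lemma mem_Ys {p : F × F} :
    p ∈ Ys F ↔ (p.2 ≠ 0 ∧ p.1*p.1 + p.2*p.1 + p.2^3 + p.2^2 = 0) := by
  simp [Ys]

lemma card_Hs (h2 : (2:F) = 0) : 2 * (Hs F).card = Fintype.card F := by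
  unfold Hs; exact card_H h2

lemma step1 (h2 : (2:F) = 0) :
    ((univ : Finset (F×F)).filter
      (fun p => p.1 ≠ p.2 ∧ p.1^4+p.1^3 = p.2^4+p.2^3)).card = (Ys F).card := by
  refine Finset.card_bij' (fun p _ => (p.1, p.1+p.2)) (fun p _ => (p.1, p.1+p.2))
    ?hi ?hj ?li ?ri
  case hi =>
    intro p hp
    obtain ⟨-, hne, heq⟩ := mem_filter.1 hp
    have hs : p.1 + p.2 ≠ 0 := fun h => hne (by linear_combination h - p.2*h2)
    refine mem_Ys.2 ⟨hs, ?_⟩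
    have hzz : p.2 = p.1 + (p.1+p.2) := by linear_combination -p.1*h2
    have hgz' : (p.1+(p.1+p.2))^4 + (p.1+(p.1+p.2))^3 = p.2^4+p.2^3 := by rw [← hzz]
    have key : (p.1+p.2) * (p.1*p.1 + (p.1+p.2)*p.1 + (p.1+p.2)^3 + (p.1+p.2)^2) = 0 := by
      linear_combination hgz' - heq + (-2*p.1^3*(p.1+p.2) - 3*p.1^2*(p.1+p.2)^2
        - p.1^2*(p.1+p.2) - 2*p.1*(p.1+p.2)^3 - p.1*(p.1+p.2)^2)*h2
    rcases mul_eq_zero.1 key with h | h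
    · exact absurd h hs
    · exact h
  case hj =>
    intro p hp
    obtain ⟨hs, hq⟩ := mem_Ys.1 hp
    refine mem_filter.2 ⟨mem_univ _, fun h => hs (by linear_combination -h), ?_⟩
    linear_combination (-(4*p.1*p.2) - 2*p.2^2 - 3*p.2)*hq +
      (2*p.1*p.2^4 + p.1*p.2^3 + p.2^5 + 2*p.2^4 + p.2^3)*h2
  case li =>
    intro p hp
    obtain ⟨a, b⟩ := p
    simp only [Prod.mk.injEq]
    exact ⟨trivial, by linear_combination a*h2⟩
  case ri =>
    intro p hp
    obtain ⟨a, b⟩ := p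
    simp only [Prod.mk.injEq]
    exact ⟨trivial, by linear_combination a*h2⟩

lemma step3 (h2 : (2:F) = 0) (s : F) :
    ((Ys F).filter (fun p => p.2 = s)).card
      = if s ≠ 0 ∧ s+1 ∈ Hs F then 2 else 0 := by
  by_cases hs : s = 0
  · subst hs
    rw [if_neg (by simp)]
    rw [Finset.card_eq_zero, Finset.filter_eq_empty_iff]
    intro p hp h0
    exact (mem_Ys.1 hp).1 h0
  · have hinv : s * s⁻¹ = 1 := mul_inv_cancel₀ hs
    have e1 : ((Ys F).filter (fun p => p.2 = s)).card
        = (univ.filter (fun x : F => x*x + s*x + s^3 + s^2 = 0)).card := by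
      refine Finset.card_bij' (fun p _ => p.1) (fun x _ => (x, s)) ?hi ?hj ?li ?ri
      case hi =>
        intro p hp
        obtain ⟨hpY, hp2⟩ := mem_filter.1 hp
        have hq := (mem_Ys.1 hpY).2
        rw [hp2] at hq
        exact mem_filter.2 ⟨mem_univ _, hq⟩
      case hj =>
        intro x hx
        exact mem_filter.2 ⟨mem_Ys.2 ⟨hs, (mem_filter.1 hx).2⟩, rfl⟩
      case li =>
        intro p hp
        obtain ⟨a, b⟩ := p
        have hp2 : b = s := (mem_filter.1 hp).2
        simp only [Prod.mk.injEq]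
        exact ⟨trivial, hp2.symm⟩
      case ri =>
        intro x hx
        rfl
    have e2 : (univ.filter (fun x : F => x*x + s*x + s^3 + s^2 = 0)).card
        = (univ.filter (fun a : F => a*a + a = s + 1)).card := by
      refine Finset.card_bij' (fun x _ => x*s⁻¹) (fun a _ => s*a) ?hi ?hj ?li ?ri
      case hi =>
        intro x hx
        have hq := (mem_filter.1 hx).2
        refine mem_filter.2 ⟨mem_univ _, ?_⟩
        linear_combination (-(s⁻¹*x) - s⁻¹*s^2 - s⁻¹*s - s - 1)*hinv + s⁻¹^2*hq + (-s-1)*h2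
      case hj =>
        intro a ha
        have hq := (mem_filter.1 ha).2
        refine mem_filter.2 ⟨mem_univ _, ?_⟩
        linear_combination s^2*hq + (s^3+s^2)*h2
      case li =>
        intro x hx
        linear_combination x*hinv
      case ri =>
        intro a ha
        linear_combination a*hinv
    rw [e1, e2]
    by_cases hmem : s + 1 ∈ Hs F
    · rw [if_pos ⟨hs, hmem⟩]
      obtain ⟨x0, hx0⟩ := mem_Hs.1 hmem
      exact T_fiber_card h2 hx0
    · rw [if_neg (by tauto)]
      rw [Finset.card_eq_zero, Finset.filter_eq_empty_iff]
      intro a _ ha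
      exact hmem (mem_Hs.2 ⟨a, ha⟩)

lemma step5 (h2 : (2:F) = 0) (h1H : (1:F) ∈ Hs F) :
    (univ.filter (fun s : F => s ≠ 0 ∧ s+1 ∈ Hs F)).card + 1 = (Hs F).card := by
  have e : (univ.filter (fun s : F => s ≠ 0 ∧ s+1 ∈ Hs F)).card
      = ((Hs F).erase 1).card := by
    refine Finset.card_bij' (fun s _ => s+1) (fun a _ => a+1) ?hi ?hj ?li ?ri
    case hi =>
      intro s hsf
      obtain ⟨-, hs0, hsH⟩ := mem_filter.1 hsf
      refine Finset.mem_erase.2 ⟨?_, hsH⟩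
      intro h
      exact hs0 (by linear_combination h)
    case hj =>
      intro a haf
      obtain ⟨hane, haH⟩ := Finset.mem_erase.1 haf
      refine mem_filter.2 ⟨mem_univ _, fun h => hane (by linear_combination h - h2), ?_⟩
      have e : a + 1 + 1 = a := by linear_combination h2
      rw [e]; exact haH
    case li =>
      intro s _
      linear_combination h2
    case ri =>
      intro a _
      linear_combination h2
  rw [e, Finset.card_erase_of_mem h1H]
  have : 1 ≤ (Hs F).card := Finset.card_pos.2 ⟨1, h1H⟩
  omega

lemma cardX_B (h2 : (2:F) = 0) (hc : ∃ c : F, c*c + c = 1) :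
    ((univ : Finset (F×F)).filter
      (fun p => p.1 ≠ p.2 ∧ p.1^4+p.1^3 = p.2^4+p.2^3)).card + 2
      = Fintype.card F := by
  obtain ⟨c, hcc⟩ := hc
  have h1H : (1:F) ∈ Hs F := mem_Hs.2 ⟨c, hcc⟩
  have step2 : (Ys F).card = ∑ s : F, ((Ys F).filter (fun p => p.2 = s)).card :=
    Finset.card_eq_sum_card_fiberwise (f := fun p : F×F => p.2) (fun x _ => mem_univ _)
  have step4 : ∑ s : F, (if s ≠ 0 ∧ s+1 ∈ Hs F then 2 else 0)
      = 2 * (univ.filter (fun s : F => s ≠ 0 ∧ s+1 ∈ Hs F)).card := by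
    rw [← Finset.sum_filter, Finset.sum_const, smul_eq_mul, mul_comm]
  have h5 := step5 h2 h1H
  have hcardH : 2 * (Hs F).card = Fintype.card F := card_Hs h2
  rw [step1 h2, step2, Finset.sum_congr rfl (fun s _ => step3 h2 s), step4]
  omega

end OmegaZeroAux

open Finset OmegaZeroAux

/-- For `q = 2^m` with `m` even and positive and `g_0(x) = x^4 + x^3` on `F_q`:
`ω_0(1) = 2(q−1)/3`, `ω_0(2) = 1`, `ω_0(4) = (q−4)/12`, and `ω_0(k) = 0` for all other
`k ≥ 1`. -/
theorem omega_zero_m_even (m : ℕ) (hm : 0 < m) (hme : Even m)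
    (F : Type*) [Field F] [Fintype F] (hF : Fintype.card F = 2 ^ m) :
    (({y : F | {x : F | x ^ 4 + x ^ 3 = y}.ncard = 1}.ncard : ℚ) = 2 * (2 ^ m - 1) / 3) ∧
    ({y : F | {x : F | x ^ 4 + x ^ 3 = y}.ncard = 2}.ncard = 1) ∧
    (({y : F | {x : F | x ^ 4 + x ^ 3 = y}.ncard = 4}.ncard : ℚ) = (2 ^ m - 4) / 12) ∧
    (∀ k : ℕ, 1 ≤ k → k ≠ 1 → k ≠ 2 → k ≠ 4 →
      {y : F | {x : F | x ^ 4 + x ^ 3 = y}.ncard = k}.ncard = 0) := by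
  classical
  have h2 : (2:F) = 0 := by
    have hcast := FiniteField.cast_card_eq_zero F
    rw [hF] at hcast
    push_cast at hcast
    exact pow_eq_zero_iff (by omega : m ≠ 0) |>.1 hcast
  have hc : ∃ c : F, c*c + c = 1 := exists_c m hm hme hF h2
  have hnu : ∀ y : F, {x : F | x^4 + x^3 = y}.ncard
      = (univ.filter (fun w : F => w^4 + w^3 = y)).card := by
    intro y
    rw [show {x : F | x^4+x^3 = y}
        = ↑(Finset.univ.filter (fun w : F => w^4+w^3 = y)) by ext w; simp,
      Set.ncard_coe_finset]
  have houter : ∀ k : ℕ, {y : F | {x : F | x^4+x^3 = y}.ncard = k}.ncard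
      = (univ.filter (fun y : F =>
          (univ.filter (fun w : F => w^4+w^3 = y)).card = k)).card := by
    intro k
    rw [show {y : F | {x : F | x^4+x^3 = y}.ncard = k}
        = ↑(univ.filter (fun y : F =>
            (univ.filter (fun w : F => w^4+w^3 = y)).card = k)) by
      ext y; simp [hnu y], Set.ncard_coe_finset]
  have n0 : (univ.filter (fun w : F => w^4+w^3 = (0:F))).card = 2 := by
    rw [fiber_zero h2]
    exact Finset.card_pair zero_ne_one
  have hcases : ∀ y : F, y ≠ 0 →
      (univ.filter (fun w : F => w^4 + w^3 = y)).card = 0 ∨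
      (univ.filter (fun w : F => w^4 + w^3 = y)).card = 1 ∨
      (univ.filter (fun w : F => w^4 + w^3 = y)).card = 4 :=
    fun y hy => fiber_card_cases h2 hc hy
  -- pointwise decompositions
  have hpt1 : ∀ y : F, (univ.filter (fun w : F => w^4+w^3 = y)).card
      = (if (univ.filter (fun w : F => w^4+w^3 = y)).card = 1 then 1 else 0)
        + (if (univ.filter (fun w : F => w^4+w^3 = y)).card = 4 then 4 else 0)
        + (if y = 0 then 2 else 0) := by
    intro y
    by_cases hy : y = 0
    · subst hy
      rw [n0]
      norm_num
    · rcases hcases y hy with h | h | h <;> rw [h] <;> simp [hy]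
  have hpt2 : ∀ y : F, ((univ.filter (fun w : F => w^4+w^3 = y)).card
        * (univ.filter (fun w : F => w^4+w^3 = y)).card
        - (univ.filter (fun w : F => w^4+w^3 = y)).card)
      = (if (univ.filter (fun w : F => w^4+w^3 = y)).card = 4 then 12 else 0)
        + (if y = 0 then 2 else 0) := by
    intro y
    by_cases hy : y = 0
    · subst hy
      rw [n0]
      norm_num
    · rcases hcases y hy with h | h | h <;> rw [h] <;> simp [hy]
  -- summed identities
  have hS1 : ∑ y : F, (if (univ.filter (fun w : F => w^4+w^3 = y)).card = 1 then 1 else 0)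
      = (univ.filter (fun y : F =>
          (univ.filter (fun w : F => w^4+w^3 = y)).card = 1)).card := by
    rw [← Finset.sum_filter]
    simp
  have hS4 : ∑ y : F, (if (univ.filter (fun w : F => w^4+w^3 = y)).card = 4 then 4 else 0)
      = 4 * (univ.filter (fun y : F =>
          (univ.filter (fun w : F => w^4+w^3 = y)).card = 4)).card := by
    rw [← Finset.sum_filter, Finset.sum_const, smul_eq_mul, mul_comm]
  have hS12 : ∑ y : F, (if (univ.filter (fun w : F => w^4+w^3 = y)).card = 4 then 12 else 0)
      = 12 * (univ.filter (fun y : F =>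
          (univ.filter (fun w : F => w^4+w^3 = y)).card = 4)).card := by
    rw [← Finset.sum_filter, Finset.sum_const, smul_eq_mul, mul_comm]
  have hS0 : ∑ y : F, (if y = (0:F) then 2 else 0) = 2 := by simp
  have EqB : (univ.filter (fun y : F =>
        (univ.filter (fun w : F => w^4+w^3 = y)).card = 1)).card
      + 4 * (univ.filter (fun y : F =>
        (univ.filter (fun w : F => w^4+w^3 = y)).card = 4)).card
      + 2 = 2^m := by
    have h := sum_nu (F := F)
    rw [hF] at h
    rw [Finset.sum_congr rfl (fun y _ => hpt1 y), Finset.sum_add_distrib,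
      Finset.sum_add_distrib, hS1, hS4, hS0] at h
    omega
  have EqA : 12 * (univ.filter (fun y : F =>
        (univ.filter (fun w : F => w^4+w^3 = y)).card = 4)).card
      + 4 = 2^m := by
    have h := cardX_B h2 hc
    rw [hF, cardX_A] at h
    rw [Finset.sum_congr rfl (fun y _ => hpt2 y), Finset.sum_add_distrib,
      hS12, hS0] at h
    omega
  refine ⟨?_, ?_, ?_, ?_⟩
  · rw [houter 1]
    have c1 : (((univ.filter (fun y : F =>
        (univ.filter (fun w : F => w^4+w^3 = y)).card = 1)).card
        + 4 * (univ.filter (fun y : F =>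
        (univ.filter (fun w : F => w^4+w^3 = y)).card = 4)).card + 2 : ℕ) : ℚ)
        = ((2^m : ℕ) : ℚ) := by rw [EqB]
    have c4 : ((12 * (univ.filter (fun y : F =>
        (univ.filter (fun w : F => w^4+w^3 = y)).card = 4)).card + 4 : ℕ) : ℚ)
        = ((2^m : ℕ) : ℚ) := by rw [EqA]
    push_cast at c1 c4
    rw [eq_div_iff (by norm_num : (3:ℚ) ≠ 0)]
    linarith
  · rw [houter 2]
    have hset : (univ.filter (fun y : F =>
        (univ.filter (fun w : F => w^4+w^3 = y)).card = 2)) = {(0:F)} := by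
      ext y
      simp only [mem_filter, mem_univ, true_and, Finset.mem_singleton]
      constructor
      · intro h
        by_contra hy
        rcases hcases y hy with h' | h' | h' <;> rw [h'] at h <;> omega
      · rintro rfl
        exact n0
    rw [hset, Finset.card_singleton]
  · rw [houter 4]
    have c4 : ((12 * (univ.filter (fun y : F =>
        (univ.filter (fun w : F => w^4+w^3 = y)).card = 4)).card + 4 : ℕ) : ℚ)
        = ((2^m : ℕ) : ℚ) := by rw [EqA]
    push_cast at c4
    rw [eq_div_iff (by norm_num : (12:ℚ) ≠ 0)]
    linarith
  · intro k hk1 hk2 hk4 hk4'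
    rw [houter k, Finset.card_eq_zero, Finset.filter_eq_empty_iff]
    intro y _ h
    by_cases hy : y = 0
    · subst hy
      rw [n0] at h
      omega
    · rcases hcases y hy with h' | h' | h' <;> rw [h'] at h <;> omega
end

section
/- Let q = 2^m with m odd and let n ≥ 1 be an integer. Then there exists a Kakeya set K in F_q^n such that |K| < (8q/(5q + 2√q − 3)) · ((5q + 2√q + 5)/8)^n. -/
open Finset

section KakeyaAux

variable {F : Type*} [Field F] [Fintype F] [DecidableEq F]

/-- For `u ≠ 0`, the map `z ↦ z^2 + u*z` over a field of characteristic 2 is (at least)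
2-to-1, so its image has at most half the size of the field. -/
private lemma kakeya_two_mul_card_image_le [CharP F 2] {u : F} (hu : u ≠ 0) :
    2 * ((Finset.univ : Finset F).image (fun z : F => z ^ 2 + u * z)).card
      ≤ Fintype.card F := by
  classical
  set f : F → F := fun z : F => z ^ 2 + u * z with hf
  have hmaps : ∀ x ∈ (Finset.univ : Finset F), f x ∈ Finset.univ.image f :=
    fun x _ => Finset.mem_image_of_mem f (Finset.mem_univ x)
  have hcard := Finset.card_eq_sum_card_fiberwise hmaps
  have htwo : ∀ v ∈ Finset.univ.image f,
      2 ≤ (Finset.univ.filter (fun z : F => f z = v)).card := by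
    intro v hv
    obtain ⟨z, -, hz⟩ := Finset.mem_image.mp hv
    have hz' : f (z + u) = v := by
      rw [← hz]
      show (z + u) ^ 2 + u * (z + u) = z ^ 2 + u * z
      have e1 : (z + u) ^ 2 = z ^ 2 + u ^ 2 := CharTwo.add_sq z u
      have e2 : u ^ 2 + u ^ 2 = 0 := CharTwo.add_self_eq_zero _
      rw [e1]
      linear_combination e2
    have hne : z ≠ z + u := fun h => hu (left_eq_add.mp h)
    have hsub : ({z, z + u} : Finset F) ⊆ Finset.univ.filter (fun w : F => f w = v) := by
      intro w hw
      rcases Finset.mem_insert.mp hw with h | h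
      · subst h; simp [Finset.mem_filter, hz]
      · rw [Finset.mem_singleton] at h; subst h; simp [Finset.mem_filter, hz']
    have hpair : ({z, z + u} : Finset F).card = 2 := by
      rw [Finset.card_insert_of_notMem (by simpa using hne), Finset.card_singleton]
    calc 2 = ({z, z + u} : Finset F).card := hpair.symm
      _ ≤ _ := Finset.card_le_card hsub
  calc 2 * (Finset.univ.image f).card
      = ∑ _v ∈ Finset.univ.image f, 2 := by rw [Finset.sum_const, smul_eq_mul, mul_comm]
    _ ≤ ∑ v ∈ Finset.univ.image f, (Finset.univ.filter (fun z : F => f z = v)).card :=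
        Finset.sum_le_sum htwo
    _ = (Finset.univ : Finset F).card := hcard.symm
    _ = Fintype.card F := Finset.card_univ

/-- Averaging argument: there is a choice of shifts `τ` such that the total size of the
product set is at most `q·((q+1)/2)^n`. -/
private lemma kakeya_exists_shifts [CharP F 2] (n : ℕ) :
    ∃ τ : Fin n → F,
      (∑ t : F, ∏ i : Fin n,
        (((Finset.univ : Finset F).image (fun z : F => z ^ 2 + (t + τ i) * z)).card : ℝ))
      ≤ (Fintype.card F : ℝ) * (((Fintype.card F : ℝ) + 1) / 2) ^ n := by
  classical
  set q : ℕ := Fintype.card F with hq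
  have hq1 : 0 < q := Fintype.card_pos
  set c : F → ℕ := fun u => ((Finset.univ : Finset F).image (fun z : F => z ^ 2 + u * z)).card
    with hc
  set M : ℝ := ∑ u : F, (c u : ℝ) with hM
  -- bound on M
  have hMle : M ≤ (q : ℝ) * ((q : ℝ) + 1) / 2 := by
    have hsplit : M = (c 0 : ℝ) + ∑ u ∈ Finset.univ.erase (0 : F), (c u : ℝ) := by
      rw [hM, ← Finset.add_sum_erase _ _ (Finset.mem_univ (0 : F))]
    have hc0 : (c 0 : ℝ) ≤ (q : ℝ) := by
      have : c 0 ≤ q := le_trans (Finset.card_image_le) (le_of_eq Finset.card_univ)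
      exact_mod_cast this
    have hcu : ∀ u ∈ Finset.univ.erase (0 : F), (c u : ℝ) ≤ (q : ℝ) / 2 := by
      intro u hu
      have hu0 : u ≠ 0 := Finset.ne_of_mem_erase hu
      have h2 : 2 * c u ≤ q := kakeya_two_mul_card_image_le hu0
      have h2' : (2 : ℝ) * (c u : ℝ) ≤ (q : ℝ) := by exact_mod_cast h2
      linarith
    have hsum : ∑ u ∈ Finset.univ.erase (0 : F), (c u : ℝ)
        ≤ ((q : ℝ) - 1) * ((q : ℝ) / 2) := by
      have hcarderase : ((Finset.univ.erase (0 : F)).card : ℝ) = (q : ℝ) - 1 := by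
        rw [Finset.card_erase_of_mem (Finset.mem_univ _), Finset.card_univ, ← hq]
        have : (1 : ℕ) ≤ q := hq1
        push_cast [Nat.cast_sub this]
        ring
      calc ∑ u ∈ Finset.univ.erase (0 : F), (c u : ℝ)
          ≤ ∑ _u ∈ Finset.univ.erase (0 : F), ((q : ℝ) / 2) := Finset.sum_le_sum hcu
        _ = ((Finset.univ.erase (0 : F)).card : ℝ) * ((q : ℝ) / 2) := by
            rw [Finset.sum_const, nsmul_eq_mul]
        _ = ((q : ℝ) - 1) * ((q : ℝ) / 2) := by rw [hcarderase]
    calc M ≤ (q : ℝ) + ((q : ℝ) - 1) * ((q : ℝ) / 2) := by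
          rw [hsplit]; exact add_le_add hc0 hsum
      _ = (q : ℝ) * ((q : ℝ) + 1) / 2 := by ring
  -- averaging identity
  have hMnonneg : 0 ≤ M := by
    rw [hM]; exact Finset.sum_nonneg (fun u _ => Nat.cast_nonneg _)
  have hiden : ∑ τ ∈ Fintype.piFinset (fun _ : Fin n => (Finset.univ : Finset F)),
      (∑ t : F, ∏ i : Fin n, (c (t + τ i) : ℝ)) = (q : ℝ) * M ^ n := by
    rw [Finset.sum_comm]
    have hin : ∀ t : F,
        ∑ τ ∈ Fintype.piFinset (fun _ : Fin n => (Finset.univ : Finset F)),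
          ∏ i : Fin n, (c (t + τ i) : ℝ) = M ^ n := by
      intro t
      rw [← Finset.prod_univ_sum (fun _ : Fin n => (Finset.univ : Finset F))
        (fun _ u => (c (t + u) : ℝ))]
      have hre : ∀ _i : Fin n, ∑ u : F, (c (t + u) : ℝ) = M := by
        intro _
        rw [hM]
        exact Fintype.sum_equiv (Equiv.addLeft t) _ _ (fun u => rfl)
      rw [Finset.prod_congr rfl (fun i _ => hre i), Finset.prod_const, Finset.card_univ,
        Fintype.card_fin]
    rw [Finset.sum_congr rfl (fun t _ => hin t), Finset.sum_const, Finset.card_univ,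
      nsmul_eq_mul, hq]
  -- choose a good τ
  have hne : (Fintype.piFinset (fun _ : Fin n => (Finset.univ : Finset F))).Nonempty := by
    apply Fintype.piFinset_nonempty.mpr
    intro _
    exact Finset.univ_nonempty
  have hconstsum : ∑ _τ ∈ Fintype.piFinset (fun _ : Fin n => (Finset.univ : Finset F)),
      ((q : ℝ) * (M / q) ^ n) = (q : ℝ) * M ^ n := by
    rw [Finset.sum_const, nsmul_eq_mul, Fintype.card_piFinset]
    have hqne : (q : ℝ) ≠ 0 := by exact_mod_cast hq1.ne'
    simp only [Finset.card_univ]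
    rw [Finset.prod_const, Finset.card_univ, Fintype.card_fin]
    push_cast
    rw [div_pow, mul_comm]
    field_simp
    rfl
  obtain ⟨τ, -, hτ⟩ := Finset.exists_le_of_sum_le hne (le_of_eq (hiden.trans hconstsum.symm))
  refine ⟨τ, ?_⟩
  have hq0 : (0 : ℝ) < (q : ℝ) := by exact_mod_cast hq1
  have hfinal : (q : ℝ) * (M / q) ^ n ≤ (q : ℝ) * (((q : ℝ) + 1) / 2) ^ n := by
    apply mul_le_mul_of_nonneg_left _ (le_of_lt hq0)
    apply pow_le_pow_left₀ (div_nonneg hMnonneg (le_of_lt hq0))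
    rw [div_le_div_iff₀ hq0 (by norm_num : (0:ℝ) < 2)]
    nlinarith [hMle]
  exact le_trans hτ hfinal

/-- Main recursive construction. -/
private lemma kakeya_construction [CharP F 2] :
    ∀ n : ℕ, 1 ≤ n →
      ∃ K : Finset (Fin n → F),
        (∀ x : Fin n → F, ∃ y : Fin n → F, ∀ t : F, (fun i => y i + t * x i) ∈ K) ∧
        ((K.card : ℝ) ≤ (Fintype.card F : ℝ) *
          ((((5 : ℝ) * (Fintype.card F : ℝ) + 2 * Real.sqrt (Fintype.card F) + 5) / 8) ^ n - 1) /
          ((((5 : ℝ) * (Fintype.card F : ℝ) + 2 * Real.sqrt (Fintype.card F) + 5) / 8) - 1)) := by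
  classical
  set q : ℝ := (Fintype.card F : ℝ) with hqdef
  set B : ℝ := (5 * q + 2 * Real.sqrt q + 5) / 8 with hBdef
  have hq2 : (2 : ℝ) ≤ q := by
    rw [hqdef]
    exact_mod_cast Fintype.one_lt_card
  have hsq : 0 ≤ Real.sqrt q := Real.sqrt_nonneg q
  have hB1 : 1 < B := by
    rw [hBdef, lt_div_iff₀ (by norm_num : (0:ℝ) < 8)]; nlinarith
  have hBne : B - 1 ≠ 0 := by linarith
  have hmid : (q + 1) / 2 ≤ B := by
    rw [hBdef, div_le_div_iff₀ (by norm_num : (0:ℝ) < 2) (by norm_num : (0:ℝ) < 8)]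
    nlinarith
  intro n hn
  induction n, hn using Nat.le_induction with
  | base =>
      refine ⟨Finset.univ, fun x => ⟨x, fun t => Finset.mem_univ _⟩, ?_⟩
      have hcard : ((Finset.univ : Finset (Fin 1 → F)).card : ℝ) = q := by
        rw [Finset.card_univ, hqdef]
        norm_cast
        simp [Fintype.card_pi]
      rw [hcard, pow_one, mul_div_assoc, div_self hBne, mul_one]
  | succ n hn1 ih =>
      obtain ⟨K', hK'cov, hK'card⟩ := ih
      obtain ⟨τ, hτ⟩ := kakeya_exists_shifts (F := F) n
      set S : F → Fin n → Finset F :=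
        fun t i => (Finset.univ : Finset F).image (fun z : F => z ^ 2 + (t + τ i) * z) with hS
      set P : Finset (Fin (n + 1) → F) :=
        Finset.univ.biUnion (fun t : F =>
          (Fintype.piFinset (S t)).image (fun w => (Fin.cons t w : Fin (n + 1) → F))) with hP
      set K : Finset (Fin (n + 1) → F) :=
        P ∪ K'.image (fun w => (Fin.cons (0 : F) w : Fin (n + 1) → F)) with hK
      have hcons : ∀ (a : F) (f : Fin n → F) (t : F) (x : Fin (n + 1) → F),
          (fun i => (Fin.cons a f : Fin (n + 1) → F) i + t * x i)
            = (Fin.cons (a + t * x 0) (fun i => f i + t * x i.succ) : Fin (n + 1) → F) := by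
        intro a f t x
        funext i
        refine Fin.cases ?_ (fun j => ?_) i
        · simp
        · simp
      refine ⟨K, ?_, ?_⟩
      · -- Kakeya property
        intro x
        by_cases hx : x 0 = 0
        · obtain ⟨y', hy'⟩ := hK'cov (fun i => x i.succ)
          refine ⟨(Fin.cons (0 : F) y' : Fin (n + 1) → F), fun t => ?_⟩
          rw [hcons, hx, mul_zero, add_zero]
          exact Finset.mem_union_right _
            (Finset.mem_image_of_mem (fun w => (Fin.cons (0 : F) w : Fin (n + 1) → F)) (hy' t))
        · set b : Fin n → F := fun i => x i.succ * (x 0)⁻¹ with hb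
          have hbx : ∀ i, b i * x 0 = x i.succ := by
            intro i
            rw [hb, mul_assoc, inv_mul_cancel₀ hx, mul_one]
          refine ⟨(Fin.cons (0 : F) (fun i => b i ^ 2 + τ i * b i) : Fin (n + 1) → F),
            fun t => ?_⟩
          rw [hcons, zero_add]
          have hcomp : (fun i => (b i ^ 2 + τ i * b i) + t * x i.succ)
              = fun i => b i ^ 2 + (t * x 0 + τ i) * b i := by
            funext i
            rw [← hbx i]
            ring
          rw [hcomp]
          apply Finset.mem_union_left
          apply Finset.mem_biUnion.mpr
          refine ⟨t * x 0, Finset.mem_univ _, ?_⟩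
          apply Finset.mem_image_of_mem
          rw [Fintype.mem_piFinset]
          intro i
          exact Finset.mem_image_of_mem _ (Finset.mem_univ (b i))
      · -- cardinality bound
        have hcard1 : (K.card : ℝ) ≤ (P.card : ℝ) + (K'.card : ℝ) := by
          have h1 : K.card ≤ P.card +
              (K'.image (fun w => (Fin.cons (0 : F) w : Fin (n + 1) → F))).card :=
            Finset.card_union_le _ _
          have h2 : (K'.image (fun w => (Fin.cons (0 : F) w : Fin (n + 1) → F))).card
              ≤ K'.card := Finset.card_image_le
          exact_mod_cast le_trans h1 (Nat.add_le_add_left h2 _)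
        have hcardP : (P.card : ℝ) ≤ q * ((q + 1) / 2) ^ n := by
          have h1 : P.card ≤ ∑ t : F,
              ((Fintype.piFinset (S t)).image (fun w => (Fin.cons t w : Fin (n + 1) → F))).card :=
            Finset.card_biUnion_le
          have h2 : ∀ t : F,
              ((Fintype.piFinset (S t)).image (fun w => (Fin.cons t w : Fin (n + 1) → F))).card
              ≤ ∏ i : Fin n, (S t i).card := by
            intro t
            exact le_trans Finset.card_image_le (le_of_eq (Fintype.card_piFinset _))
          have h3 : P.card ≤ ∑ t : F, ∏ i : Fin n, (S t i).card :=
            le_trans h1 (Finset.sum_le_sum (fun t _ => h2 t))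
          have h4 : (P.card : ℝ) ≤ ∑ t : F, ∏ i : Fin n, ((S t i).card : ℝ) := by
            calc (P.card : ℝ) ≤ ((∑ t : F, ∏ i : Fin n, (S t i).card : ℕ) : ℝ) := by
                  exact_mod_cast h3
              _ = ∑ t : F, ∏ i : Fin n, ((S t i).card : ℝ) := by push_cast; rfl
          exact le_trans h4 hτ
        have hpowle : ((q + 1) / 2) ^ n ≤ B ^ n :=
          pow_le_pow_left₀ (by positivity) hmid n
        have hq0 : (0 : ℝ) < q := by linarith
        calc (K.card : ℝ) ≤ (P.card : ℝ) + (K'.card : ℝ) := hcard1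
          _ ≤ q * ((q + 1) / 2) ^ n + q * (B ^ n - 1) / (B - 1) := add_le_add hcardP hK'card
          _ ≤ q * B ^ n + q * (B ^ n - 1) / (B - 1) := by nlinarith
          _ = q * (B ^ (n + 1) - 1) / (B - 1) := by
              field_simp
              ring

end KakeyaAux

/-- For `q = 2^m` with `m` odd and `n ≥ 1`, there is a Kakeya set `K ⊆ F_q^n` with
`|K| < (8q/(5q + 2√q − 3)) · ((5q + 2√q + 5)/8)^n`, where `√q` is the real square root. -/
theorem kakeya_upper_bound_odd_power (m n : ℕ) (hm : Odd m) (hn : 1 ≤ n)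
    (F : Type*) [Field F] [Fintype F] (hF : Fintype.card F = 2 ^ m) :
    ∃ K : Set (Fin n → F),
      (∀ x : Fin n → F, ∃ y : Fin n → F, ∀ t : F, (fun i => y i + t * x i) ∈ K) ∧
      (K.ncard : ℝ) <
        8 * 2 ^ m / (5 * 2 ^ m + 2 * Real.sqrt (2 ^ m) - 3) *
          ((5 * 2 ^ m + 2 * Real.sqrt (2 ^ m) + 5) / 8) ^ n := by
  classical
  -- the characteristic is 2
  have hcast : ((2 ^ m : ℕ) : F) = 0 := by
    rw [← hF]; exact FiniteField.cast_card_eq_zero F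
  have hrdvd : ringChar F ∣ 2 ^ m := (CharP.cast_eq_zero_iff F (ringChar F) (2 ^ m)).mp hcast
  have hrprime : (ringChar F).Prime := CharP.char_is_prime F (ringChar F)
  have hr2 : ringChar F = 2 :=
    (Nat.prime_dvd_prime_iff_eq hrprime Nat.prime_two).mp (hrprime.dvd_of_dvd_pow hrdvd)
  haveI hchar : CharP F 2 := hr2 ▸ ringChar.charP F
  obtain ⟨K, hKcov, hKcard⟩ := kakeya_construction (F := F) n hn
  refine ⟨(K : Set (Fin n → F)), ?_, ?_⟩
  · intro x
    obtain ⟨y, hy⟩ := hKcov x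
    exact ⟨y, fun t => Finset.mem_coe.mpr (hy t)⟩
  · rw [Set.ncard_coe_finset]
    set q : ℝ := (Fintype.card F : ℝ) with hqdef
    have hqval : q = (2 : ℝ) ^ m := by
      rw [hqdef, hF]; push_cast; ring
    set B : ℝ := (5 * q + 2 * Real.sqrt q + 5) / 8 with hBdef
    have hq2 : (2 : ℝ) ≤ q := by
      rw [hqdef]
      exact_mod_cast Fintype.one_lt_card
    have hsq : 0 ≤ Real.sqrt q := Real.sqrt_nonneg q
    have hB1 : 1 < B := by
      rw [hBdef, lt_div_iff₀ (by norm_num : (0:ℝ) < 8)]; nlinarith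
    have hBpos : 0 < B - 1 := by linarith
    have hqpos : (0:ℝ) < q := by linarith
    have hlt : q * (B ^ n - 1) / (B - 1) < q * B ^ n / (B - 1) := by
      have hnum : q * (B ^ n - 1) < q * B ^ n := by nlinarith
      exact div_lt_div_of_pos_right hnum hBpos
    have h2 : (K.card : ℝ) < q * B ^ n / (B - 1) := lt_of_le_of_lt hKcard hlt
    have hrewrite : q * B ^ n / (B - 1)
        = 8 * 2 ^ m / (5 * 2 ^ m + 2 * Real.sqrt (2 ^ m) - 3) *
          ((5 * 2 ^ m + 2 * Real.sqrt (2 ^ m) + 5) / 8) ^ n := by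
      rw [← hqval, ← hBdef]
      have hden : (5 * q + 2 * Real.sqrt q - 3) ≠ 0 := by nlinarith
      have hBm1 : B - 1 = (5 * q + 2 * Real.sqrt q - 3) / 8 := by rw [hBdef]; ring
      rw [hBm1]
      field_simp
    rw [← hrewrite]
    exact h2
end

section
/- Let q be an odd prime power and n ≥ 1 an integer. Then there exists a Kakeya set K in F_q^n such that |K| < 2·(1 + 1/(q−1))·((q+1)/2)^n. -/
open Finset

lemma kakeya_two_ne_zero (F : Type*) [Field F] [Fintype F] (hq : Odd (Fintype.card F)) :
    (2 : F) ≠ 0 := by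
  intro h
  have hdvd : ringChar F ∣ 2 := ringChar.dvd (by exact_mod_cast h)
  have hne1 : ringChar F ≠ 1 := CharP.ringChar_ne_one
  have h2 : ringChar F = 2 := ((Nat.dvd_prime Nat.prime_two).mp hdvd).resolve_left hne1
  have := FiniteField.even_card_of_char_two h2
  obtain ⟨k, hk⟩ := hq
  omega

lemma kakeya_sq_card (F : Type*) [Field F] [Fintype F] [DecidableEq F]
    (hq : Odd (Fintype.card F)) :
    2 * ((univ : Finset F).image (fun x => x ^ 2)).card ≤ Fintype.card F + 1 := by
  set A : Finset F := (univ : Finset F).image (fun x => x ^ 2) with hA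
  have h0 : (0 : F) ∈ A := mem_image.2 ⟨0, mem_univ _, by ring⟩
  have himg : ((univ : Finset F).erase 0).image (fun x => x ^ 2) = A.erase 0 := by
    ext a
    simp only [mem_image, mem_erase, hA]
    constructor
    · rintro ⟨x, ⟨hx0, -⟩, rfl⟩
      exact ⟨pow_ne_zero _ hx0, ⟨x, mem_univ _, rfl⟩⟩
    · rintro ⟨ha, x, -, rfl⟩
      exact ⟨x, ⟨fun h => ha (by rw [h]; ring), mem_univ _⟩, rfl⟩
  have key : 2 * (A.erase 0).card ≤ ((univ : Finset F).erase 0).card := by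
    rw [← himg]
    apply Finset.mul_card_image_le_card
    intro b hb
    rw [himg, mem_erase, hA, mem_image] at hb
    obtain ⟨hb0, x, -, rfl⟩ := hb
    have hx0 : x ≠ 0 := fun h => hb0 (by rw [h]; ring)
    have hxne : x ≠ -x := by
      intro h
      apply hx0
      have : (2 : F) * x = 0 := by linear_combination h
      rcases mul_eq_zero.1 this with h2 | h2
      · exact absurd h2 (kakeya_two_ne_zero F hq)
      · exact h2
    have hsub : ({x, -x} : Finset F) ⊆
        (((univ : Finset F).erase 0).filter fun z => z ^ 2 = x ^ 2) := by
      intro z hz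
      simp only [mem_insert, mem_singleton] at hz
      rcases hz with rfl | rfl
      · simp [mem_filter, mem_erase, hx0]
      · simp [mem_filter, mem_erase, hx0, neg_ne_zero]
    calc 2 = ({x, -x} : Finset F).card := (card_pair hxne).symm
      _ ≤ _ := card_le_card hsub
  have hAc : 1 ≤ A.card := card_pos.2 ⟨0, h0⟩
  have hFc : 1 ≤ Fintype.card F := Fintype.card_pos
  rw [card_erase_of_mem h0, card_erase_of_mem (mem_univ _), card_univ] at key
  omega

lemma kakeya_aux (F : Type*) [Field F] [Fintype F] [DecidableEq F]
    (hq : Odd (Fintype.card F)) (n : ℕ) :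
    ∃ K : Finset (Fin n → F),
      (∀ x : Fin n → F, ∃ y : Fin n → F, ∀ t : F, (fun i => y i + t * x i) ∈ K) ∧
      (K.card : ℚ) ≤
        2 * (Fintype.card F : ℚ) / ((Fintype.card F : ℚ) - 1) *
          (((Fintype.card F : ℚ) + 1) / 2) ^ n
        - 2 * (Fintype.card F : ℚ) / ((Fintype.card F : ℚ) - 1) + 1 := by
  induction n with
  | zero =>
    refine ⟨univ, fun x => ⟨x, fun t => mem_univ _⟩, ?_⟩
    have h1 : ((univ : Finset (Fin 0 → F)).card : ℚ) = 1 := by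
      simp
    rw [h1, pow_zero, mul_one]
    linarith
  | succ n ih =>
    obtain ⟨K, hK, hKc⟩ := ih
    have h2F : (2 : F) ≠ 0 := kakeya_two_ne_zero F hq
    have hq3 : 3 ≤ Fintype.card F := by
      have h1 := Fintype.one_lt_card (α := F)
      obtain ⟨k, hk⟩ := hq
      omega
    have hq3Q : (3 : ℚ) ≤ (Fintype.card F : ℚ) := by exact_mod_cast hq3
    have hq1 : (Fintype.card F : ℚ) - 1 ≠ 0 := by linarith
    set q : ℚ := (Fintype.card F : ℚ) with hqdef
    set A : Finset F := (univ : Finset F).image (fun x => x ^ 2) with hAdef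
    set T : Finset (Fin (n + 1) → F) :=
      ((Fintype.piFinset fun _ : Fin n => A) ×ˢ (univ : Finset F)).image
        (fun p : (Fin n → F) × F => Fin.snoc (fun i => p.1 i - p.2 ^ 2 / 4) p.2) with hTdef
    refine ⟨T ∪ K.image (fun v => Fin.snoc v 0), ?_, ?_⟩
    · intro x
      by_cases hc : x (Fin.last n) = 0
      · obtain ⟨y', hy'⟩ := hK (fun j => x j.castSucc)
        refine ⟨Fin.snoc y' 0, fun t => ?_⟩
        apply mem_union_right
        have hfun : (fun i => (Fin.snoc y' 0 : Fin (n+1) → F) i + t * x i)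
            = Fin.snoc (fun j => y' j + t * x j.castSucc) (0 : F) := by
          funext i
          induction i using Fin.lastCases with
          | last => simp [hc]
          | cast j => simp
        rw [hfun]
        exact mem_image_of_mem _ (hy' t)
      · refine ⟨Fin.snoc (fun j => (x j.castSucc / x (Fin.last n)) ^ 2) 0, fun t => ?_⟩
        apply mem_union_left
        apply mem_image.2
        refine ⟨⟨fun j => (x j.castSucc / x (Fin.last n) + t * x (Fin.last n) / 2) ^ 2,
          t * x (Fin.last n)⟩, ?_, ?_⟩
        · exact mem_product.2 ⟨Fintype.mem_piFinset.2 fun j => mem_image.2 ⟨_, mem_univ _, rfl⟩,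
            mem_univ _⟩
        · funext i
          refine Fin.lastCases ?_ (fun j => ?_) i
          · simp
          · simp only [Fin.snoc_castSucc]
            have h4 : (4 : F) ≠ 0 := by
              have := mul_ne_zero h2F h2F
              norm_num at this ⊢
              exact this
            field_simp [h4]
            ring
    · have hTc : T.card ≤ A.card ^ n * Fintype.card F := by
        calc T.card ≤ ((Fintype.piFinset fun _ : Fin n => A) ×ˢ (univ : Finset F)).card :=
              card_image_le
          _ = A.card ^ n * Fintype.card F := by
              rw [card_product, Fintype.card_piFinset_const, card_univ]
      have hUc : (T ∪ K.image (fun v => Fin.snoc v 0)).card ≤ T.card + K.card :=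
        le_trans (card_union_le _ _) (by gcongr; exact card_image_le)
      have hAc : (A.card : ℚ) ≤ (q + 1) / 2 := by
        have := kakeya_sq_card F hq
        rw [← hAdef] at this
        have : ((2 * A.card : ℕ) : ℚ) ≤ ((Fintype.card F + 1 : ℕ) : ℚ) := by exact_mod_cast this
        push_cast at this
        linarith
      have hApow : (A.card : ℚ) ^ n ≤ ((q + 1) / 2) ^ n :=
        pow_le_pow_left₀ (by positivity) hAc n
      have hstep : ((q + 1) / 2) ^ n * q + (2 * q / (q - 1) * ((q + 1) / 2) ^ n
            - 2 * q / (q - 1) + 1)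
          = 2 * q / (q - 1) * ((q + 1) / 2) ^ (n + 1) - 2 * q / (q - 1) + 1 := by
        field_simp
        ring
      calc ((T ∪ K.image (fun v => Fin.snoc v 0)).card : ℚ)
          ≤ (T.card : ℚ) + (K.card : ℚ) := by exact_mod_cast hUc
        _ ≤ (A.card : ℚ) ^ n * q + (K.card : ℚ) := by
            have : (T.card : ℚ) ≤ (A.card : ℚ) ^ n * q := by
              rw [hqdef]; exact_mod_cast hTc
            linarith
        _ ≤ ((q + 1) / 2) ^ n * q + (2 * q / (q - 1) * ((q + 1) / 2) ^ n
              - 2 * q / (q - 1) + 1) := by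
            have hq0 : (0 : ℚ) ≤ q := by linarith
            have := mul_le_mul_of_nonneg_right hApow hq0
            linarith
        _ = _ := hstep


/-- For an odd prime power `q` and `n ≥ 1`, there is a Kakeya set `K ⊆ F_q^n` with
`|K| < 2·(1 + 1/(q−1))·((q+1)/2)^n`. -/
theorem kakeya_upper_bound_q_odd (n : ℕ) (hn : 1 ≤ n)
    (F : Type*) [Field F] [Fintype F] (hq : Odd (Fintype.card F)) :
    ∃ K : Set (Fin n → F),
      (∀ x : Fin n → F, ∃ y : Fin n → F, ∀ t : F, (fun i => y i + t * x i) ∈ K) ∧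
      (K.ncard : ℚ) <
        2 * (1 + 1 / (Fintype.card F - 1)) * ((Fintype.card F + 1) / 2) ^ n := by
  classical
  obtain ⟨K, hK, hKc⟩ := kakeya_aux F hq n
  refine ⟨(K : Set (Fin n → F)), fun x => ?_, ?_⟩
  · obtain ⟨y, hy⟩ := hK x
    exact ⟨y, fun t => Finset.mem_coe.2 (hy t)⟩
  · set q : ℚ := (Fintype.card F : ℚ) with hqdef
    have hq3 : 3 ≤ Fintype.card F := by
      have h1 := Fintype.one_lt_card (α := F)
      obtain ⟨k, hk⟩ := hq
      omega
    have hq3Q : (3 : ℚ) ≤ q := by rw [hqdef]; exact_mod_cast hq3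
    have hd : (0 : ℚ) < q - 1 := by linarith
    have e1 : 2 * (1 + 1 / (q - 1)) = 2 * q / (q - 1) := by
      field_simp
      ring
    have hlt : (1 : ℚ) < 2 * q / (q - 1) := by
      rw [lt_div_iff₀ hd]
      linarith
    have hP : (0 : ℚ) < ((q + 1) / 2) ^ n := by positivity
    rw [Set.ncard_coe_finset, e1]
    calc ((K.card : ℚ)) ≤ 2 * q / (q - 1) * ((q + 1) / 2) ^ n - 2 * q / (q - 1) + 1 := hKc
      _ < 2 * q / (q - 1) * ((q + 1) / 2) ^ n := by linarith
end
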